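/- arXiv:1212.1029 — 3 statements merged into one kernel-verified Lean document; each statement's English description precedes it below -/
import Mathlib

section
/- Let G be a connected graph with maximum degree Δ ≥ 3 and γ ≥ 2. If χ_γ(G) = Δ·((Δ-1)^γ - 1)/(Δ-2) + 1 =: M+1, then G is Δ-regular with exactly M+1 vertices, girth 2γ+1, and diameter γ (i.e., G is a Moore graph). -/
/-- The γ-th power of a graph: two vertices are adjacent iff their distance in G is at most γ. -/
def SimpleGraph.power {V : Type*} (G : SimpleGraph V) (γ : ℕ) : SimpleGraph V where
  Adj u v := u ≠ v ∧ G.Reachable u v ∧ G.dist u v ≤ γ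
  symm := ⟨fun u v => by
    rintro ⟨h1, h2, h3⟩
    exact ⟨h1.symm, h2.symm, by rwa [SimpleGraph.dist_comm]⟩⟩
  loopless := ⟨fun v => by simp⟩

noncomputable instance {V : Type*} (G : SimpleGraph V) (γ : ℕ) :
    DecidableRel (G.power γ).Adj := Classical.decRel _


open SimpleGraph Finset

namespace MooreAux

variable {V : Type*} [DecidableEq V] {G : SimpleGraph V}
set_option linter.unusedSectionVars false

lemma support_eq_map {u v : V} (p : G.Walk u v) :
    p.support = (List.range (p.length + 1)).map p.getVert := by
  induction p with
  | nil => simp [SimpleGraph.Walk.getVert]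
  | @cons a b c h q ih =>
    rw [SimpleGraph.Walk.support_cons, SimpleGraph.Walk.length_cons, List.range_succ_eq_map,
      List.map_cons, List.map_map, ih]
    refine List.cons_eq_cons.mpr ⟨(SimpleGraph.Walk.getVert_zero _).symm, ?_⟩
    apply List.map_congr_left
    intro i _
    simp [Function.comp, SimpleGraph.Walk.getVert_cons_succ]

lemma dist_getVert_to_end {u v : V} (p : G.Walk u v) (j : ℕ) :
    G.dist (p.getVert j) v ≤ p.length - j := by
  induction p generalizing j with
  | nil => simp [SimpleGraph.Walk.getVert]
  | @cons a b c h q ih =>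
    cases j with
    | zero =>
      simpa using SimpleGraph.dist_le (SimpleGraph.Walk.cons h q)
    | succ j =>
      simpa [SimpleGraph.Walk.getVert_cons_succ, Nat.succ_sub_succ] using ih j

lemma reachable_getVert {u v : V} (p : G.Walk u v) (j : ℕ) :
    G.Reachable u (p.getVert j) := by
  have hmem : p.getVert j ∈ p.support := by
    rw [SimpleGraph.Walk.mem_support_iff_exists_getVert]
    rcases le_or_gt j p.length with h | h
    · exact ⟨j, rfl, h⟩
    · exact ⟨p.length, by rw [SimpleGraph.Walk.getVert_of_length_le p h.le,
        SimpleGraph.Walk.getVert_length], le_rfl⟩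
  exact ⟨p.takeUntil _ hmem⟩

lemma dist_triangle' {x z y : V} (hxz : G.Reachable x z) (hzy : G.Reachable z y) :
    G.dist x y ≤ G.dist x z + G.dist z y := by
  obtain ⟨p, hp⟩ := hxz.exists_walk_length_eq_dist
  obtain ⟨q, hq⟩ := hzy.exists_walk_length_eq_dist
  simpa [hp, hq] using SimpleGraph.dist_le (p.append q)

lemma dist_getVert_le {u v : V} (p : G.Walk u v) (j : ℕ) :
    G.dist u (p.getVert j) ≤ j := by
  rcases le_or_gt p.length j with h | h
  · rw [SimpleGraph.Walk.getVert_of_length_le p h]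
    exact le_trans (SimpleGraph.dist_le p) h
  · have := dist_getVert_to_end p.reverse (p.length - j)
    rw [SimpleGraph.Walk.getVert_reverse, SimpleGraph.Walk.length_reverse] at this
    rw [Nat.sub_sub_self h.le] at this
    rw [SimpleGraph.dist_comm]
    exact le_trans this (by omega)

/-- vertices of a geodesic are at distance equal to their index -/
lemma geodesic_getVert {u v : V} (p : G.Walk u v) (hp : p.length = G.dist u v)
    {j : ℕ} (hj : j ≤ p.length) : G.dist u (p.getVert j) = j := by
  refine le_antisymm (dist_getVert_le p j) ?_
  have h1 : G.dist (p.getVert j) v ≤ p.length - j := dist_getVert_to_end p j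
  have hr2 : G.Reachable v (p.reverse.getVert (p.length - j)) :=
    reachable_getVert p.reverse (p.length - j)
  rw [SimpleGraph.Walk.getVert_reverse, Nat.sub_sub_self hj] at hr2
  have h2 : G.dist u v ≤ G.dist u (p.getVert j) + G.dist (p.getVert j) v :=
    dist_triangle' (reachable_getVert p j) hr2.symm
  omega

lemma geodesic_isPath {u v : V} (p : G.Walk u v) (hp : p.length = G.dist u v) :
    p.IsPath := by
  induction p with
  | nil => simp
  | @cons a b c h q ih =>
    rw [SimpleGraph.Walk.length_cons] at hp
    have hbc : G.dist b c = q.length := by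
      refine le_antisymm (SimpleGraph.dist_le q) ?_
      by_contra hlt
      push_neg at hlt
      obtain ⟨w, hw⟩ := (SimpleGraph.Reachable.exists_walk_length_eq_dist ⟨q⟩)
      have := SimpleGraph.dist_le (SimpleGraph.Walk.cons h w)
      rw [SimpleGraph.Walk.length_cons, hw] at this
      omega
    rw [SimpleGraph.Walk.cons_isPath_iff]
    refine ⟨ih hbc.symm, fun hmem => ?_⟩
    rw [SimpleGraph.Walk.mem_support_iff_exists_getVert] at hmem
    obtain ⟨n, hn, hnle⟩ := hmem
    have := dist_getVert_to_end q n
    rw [hn] at this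
    omega

/-- existence of a neighbour one step closer -/
lemma exists_down {v u : V} (hr : G.Reachable v u) (hd : G.dist v u ≠ 0) :
    ∃ w, G.Adj w u ∧ G.dist v w = G.dist v u - 1 := by
  obtain ⟨p, hp⟩ := hr.exists_walk_length_eq_dist
  refine ⟨p.getVert (G.dist v u - 1), ?_, ?_⟩
  · have h1 : G.dist v u - 1 < p.length := by omega
    have := p.adj_getVert_succ h1
    have h2 : G.dist v u - 1 + 1 = p.length := by omega
    rw [h2, SimpleGraph.Walk.getVert_length] at this
    exact this
  · exact geodesic_getVert p hp (by omega)

end MooreAux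


open SimpleGraph Finset

namespace MooreAux

lemma rank_lt {k1 k2 i1 i2 n : ℕ} (h : k1 < k2) (hi1 : i1 < n) :
    k1 * n + i1 < k2 * n + i2 := by
  have h1 : k1 * n + i1 < (k1 + 1) * n := by
    rw [Nat.add_mul, Nat.one_mul]
    omega
  have h2 : (k1 + 1) * n ≤ k2 * n := Nat.mul_le_mul_right n (by omega)
  omega

lemma rank_inj_aux {n k1 k2 i1 i2 : ℕ} (hi1 : i1 < n) (hi2 : i2 < n)
    (h : k1 * n + i1 = k2 * n + i2) : k1 = k2 ∧ i1 = i2 := by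
  rcases Nat.lt_trichotomy k1 k2 with hlt | heq | hgt
  · exact absurd h (Nat.ne_of_lt (rank_lt hlt hi1))
  · subst heq
    omega
  · exact absurd h.symm (Nat.ne_of_lt (rank_lt hgt hi2))

variable {V : Type*} [Fintype V] [DecidableEq V]

/-- greedy colouring along the order given by `r`. -/
noncomputable def greedy (H : SimpleGraph V) (r : V → ℕ) (k : ℕ) (v : V) : ℕ :=
  sInf {m : ℕ | m < k ∧ ∀ u, H.Adj v u → r u < r v → greedy H r k u ≠ m}
termination_by r v
decreasing_by assumption

lemma greedy_mem (H : SimpleGraph V) [DecidableRel H.Adj] (r : V → ℕ) (k : ℕ) (v : V)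
    (hv : ((H.neighborFinset v).filter (fun u => r u < r v)).card < k) :
    greedy H r k v < k ∧ ∀ u, H.Adj v u → r u < r v → greedy H r k u ≠ greedy H r k v := by
  have hne : {m : ℕ | m < k ∧ ∀ u, H.Adj v u → r u < r v → greedy H r k u ≠ m}.Nonempty := by
    set s := ((H.neighborFinset v).filter (fun u => r u < r v)).image (greedy H r k) with hs
    have hcard : s.card < k := lt_of_le_of_lt (Finset.card_image_le) hv
    have : (Finset.range k \ s).Nonempty := by
      apply Finset.card_pos.mp
      have := Finset.le_card_sdiff s (Finset.range k)
      have h2 : s.card < (Finset.range k).card := by simpa using hcard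
      omega
    obtain ⟨m, hm⟩ := this
    rw [Finset.mem_sdiff, Finset.mem_range] at hm
    refine ⟨m, hm.1, fun u hu hr hEq => hm.2 ?_⟩
    rw [hs]
    apply Finset.mem_image.mpr
    exact ⟨u, by simp [hu, hr], hEq⟩
  have := Nat.sInf_mem hne
  rw [← greedy] at this
  exact this

lemma greedy_colorable (H : SimpleGraph V) [DecidableRel H.Adj] (r : V → ℕ)
    (hr : Function.Injective r) (k : ℕ)
    (hk : ∀ v, ((H.neighborFinset v).filter (fun u => r u < r v)).card < k) :
    H.Colorable k := by
  refine ⟨SimpleGraph.Coloring.mk (fun v => ⟨greedy H r k v, (greedy_mem H r k v (hk v)).1⟩) ?_⟩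
  intro a b hab hEq
  have hne : r a ≠ r b := fun h => (H.ne_of_adj hab) (hr h)
  have hEq' : greedy H r k a = greedy H r k b := by simpa using hEq
  rcases lt_or_gt_of_ne hne with h | h
  · exact (greedy_mem H r k b (hk b)).2 a hab.symm h hEq'
  · exact (greedy_mem H r k a (hk a)).2 b hab h hEq'.symm

end MooreAux


open SimpleGraph Finset

namespace MooreAux

variable {V : Type*} [Fintype V] [DecidableEq V] {G : SimpleGraph V} [DecidableRel G.Adj]
set_option linter.unusedSectionVars false

/-- set of vertices at distance exactly `i` from `v`. -/
noncomputable def lvl (G : SimpleGraph V) [Fintype V] (v : V) (i : ℕ) : Finset V :=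
  Finset.univ.filter (fun u => G.dist v u = i)

/-- closed ball of radius `r` around `v`. -/
noncomputable def gball (G : SimpleGraph V) [Fintype V] (v : V) (r : ℕ) : Finset V :=
  Finset.univ.filter (fun u => G.dist v u ≤ r)

lemma mem_lvl {v u : V} {i : ℕ} : u ∈ lvl G v i ↔ G.dist v u = i := by simp [lvl]

lemma mem_gball {v u : V} {r : ℕ} : u ∈ gball G v r ↔ G.dist v u ≤ r := by simp [gball]

lemma lvl_zero (hconn : G.Connected) (v : V) : lvl G v 0 = {v} := by
  ext u
  simp [mem_lvl, (hconn.dist_eq_zero_iff (u := v) (v := u)), eq_comm]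

lemma lvl_one (v : V) : lvl G v 1 = G.neighborFinset v := by
  ext u
  simp [mem_lvl, SimpleGraph.dist_eq_one_iff_adj]

lemma card_gball (v : V) (r : ℕ) :
    (gball G v r).card = ∑ i ∈ Finset.range (r + 1), (lvl G v i).card := by
  rw [← Finset.card_biUnion]
  · congr 1
    ext u
    simp only [mem_gball, Finset.mem_biUnion, Finset.mem_range, mem_lvl]
    constructor
    · intro h; exact ⟨G.dist v u, by omega, rfl⟩
    · rintro ⟨i, hi, rfl⟩; omega
  · intro i _ j _ hij
    simp only [Finset.disjoint_left, mem_lvl]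
    intro a ha hb
    exact hij (ha ▸ hb)

lemma nbr_up_le {Δ : ℕ} (hconn : G.Connected) (hdeg : ∀ u, G.degree u ≤ Δ)
    {v w : V} {i : ℕ} (hi : 1 ≤ i) (hw : w ∈ lvl G v i) :
    ((G.neighborFinset w) ∩ lvl G v (i + 1)).card ≤ Δ - 1 := by
  rw [mem_lvl] at hw
  obtain ⟨d, hd, hdist⟩ := exists_down (hconn v w) (by omega)
  have hdmem : d ∈ G.neighborFinset w := by
    rw [SimpleGraph.mem_neighborFinset]; exact hd.symm
  have hsub : (G.neighborFinset w) ∩ lvl G v (i + 1) ⊆ (G.neighborFinset w).erase d := by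
    intro x hx
    rw [Finset.mem_inter, mem_lvl] at hx
    refine Finset.mem_erase.mpr ⟨fun h => ?_, hx.1⟩
    subst h
    omega
  calc ((G.neighborFinset w) ∩ lvl G v (i + 1)).card ≤ ((G.neighborFinset w).erase d).card :=
        Finset.card_le_card hsub
    _ = G.degree w - 1 := by rw [Finset.card_erase_of_mem hdmem, SimpleGraph.card_neighborFinset_eq_degree]
    _ ≤ Δ - 1 := by have := hdeg w; omega

lemma lvl_subset_biUnion (hconn : G.Connected) (v : V) (i : ℕ) :
    lvl G v (i + 1) ⊆ (lvl G v i).biUnion (fun w => (G.neighborFinset w) ∩ lvl G v (i + 1)) := by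
  intro u hu
  have hu' := mem_lvl.mp hu
  obtain ⟨w, hw, hwdist⟩ := exists_down (hconn v u) (by omega)
  rw [Finset.mem_biUnion]
  refine ⟨w, mem_lvl.mpr (by omega), ?_⟩
  rw [Finset.mem_inter, SimpleGraph.mem_neighborFinset]
  exact ⟨hw, hu⟩

lemma lvl_succ_card_le {Δ : ℕ} (hconn : G.Connected) (hdeg : ∀ u, G.degree u ≤ Δ)
    {v : V} {i : ℕ} (hi : 1 ≤ i) :
    (lvl G v (i + 1)).card ≤ (Δ - 1) * (lvl G v i).card := by
  calc (lvl G v (i + 1)).card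
      ≤ ((lvl G v i).biUnion (fun w => (G.neighborFinset w) ∩ lvl G v (i + 1))).card :=
        Finset.card_le_card (lvl_subset_biUnion hconn v i)
    _ ≤ ∑ w ∈ lvl G v i, ((G.neighborFinset w) ∩ lvl G v (i + 1)).card :=
        Finset.card_biUnion_le
    _ ≤ ∑ _w ∈ lvl G v i, (Δ - 1) :=
        Finset.sum_le_sum (fun w hw => nbr_up_le hconn hdeg hi hw)
    _ = (Δ - 1) * (lvl G v i).card := by rw [Finset.sum_const, smul_eq_mul, Nat.mul_comm]

lemma lvl_card_le {Δ : ℕ} (hconn : G.Connected) (hdeg : ∀ u, G.degree u ≤ Δ)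
    (v : V) (i : ℕ) (hi : 1 ≤ i) :
    (lvl G v i).card ≤ Δ * (Δ - 1) ^ (i - 1) := by
  induction i with
  | zero => omega
  | succ i ih =>
    rcases Nat.eq_or_lt_of_le hi with h | h
    · have : i = 0 := by omega
      subst this
      simpa [lvl_one] using hdeg v
    · have hi1 : 1 ≤ i := by omega
      calc (lvl G v (i + 1)).card ≤ (Δ - 1) * (lvl G v i).card :=
            lvl_succ_card_le hconn hdeg hi1
        _ ≤ (Δ - 1) * (Δ * (Δ - 1) ^ (i - 1)) := Nat.mul_le_mul_left _ (ih hi1)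
        _ = Δ * (Δ - 1) ^ i := by
            conv_rhs => rw [show i = (i - 1) + 1 by omega, pow_succ]
            ring
    
lemma card_gball_le {Δ : ℕ} (hconn : G.Connected) (hdeg : ∀ u, G.degree u ≤ Δ)
    (v : V) (γ : ℕ) :
    (gball G v γ).card ≤ 1 + Δ * ∑ i ∈ Finset.range γ, (Δ - 1) ^ i := by
  rw [card_gball, Finset.sum_range_succ']
  rw [lvl_zero hconn, Finset.card_singleton, Finset.mul_sum, add_comm]
  apply Nat.add_le_add_left
  apply Finset.sum_le_sum
  intro i _
  simpa using lvl_card_le hconn hdeg v (i + 1) (by omega)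

end MooreAux


open SimpleGraph Finset

namespace MooreAux

variable {V : Type*} [Fintype V] [DecidableEq V] {G : SimpleGraph V} [DecidableRel G.Adj]
set_option linter.unusedSectionVars false

lemma geom_identity {Δ : ℕ} (h3 : 2 ≤ Δ) (γ : ℕ) :
    (Δ - 2) * ∑ i ∈ Finset.range γ, (Δ - 1) ^ i = (Δ - 1) ^ γ - 1 := by
  induction γ with
  | zero => simp
  | succ γ ih =>
    rw [Finset.sum_range_succ, Nat.mul_add, ih, pow_succ]
    have hx : 1 ≤ (Δ - 1) ^ γ := Nat.one_le_pow _ _ (by omega)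
    have h1 : (Δ - 1) ^ γ * (Δ - 1) = (Δ - 1) ^ γ * (Δ - 2) + (Δ - 1) ^ γ := by
      rw [show Δ - 1 = (Δ - 2) + 1 by omega, Nat.mul_add, Nat.mul_one]
    rw [h1]
    have h2 : (Δ - 2) * (Δ - 1) ^ γ = (Δ - 1) ^ γ * (Δ - 2) := Nat.mul_comm _ _
    omega

lemma moore_eq_sum {Δ : ℕ} (h3 : 3 ≤ Δ) (γ : ℕ) :
    Δ * ((Δ - 1) ^ γ - 1) / (Δ - 2) = Δ * ∑ i ∈ Finset.range γ, (Δ - 1) ^ i := by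
  rw [← geom_identity (by omega : 2 ≤ Δ) γ, ← Nat.mul_assoc, Nat.mul_comm Δ (Δ - 2),
    Nat.mul_assoc, Nat.mul_div_cancel_left _ (by omega : 0 < Δ - 2)]

/-- double counting of edges between two vertex sets -/
lemma sum_inter_comm (A B : Finset V) :
    ∑ w ∈ A, ((G.neighborFinset w) ∩ B).card = ∑ u ∈ B, ((G.neighborFinset u) ∩ A).card := by
  have h : ∀ (C D : Finset V), ∀ w, ((G.neighborFinset w) ∩ D).card
      = ∑ u ∈ D, (if G.Adj w u then 1 else 0) := by
    intro C D w
    rw [← Finset.sum_filter]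
    simp only [Finset.sum_const, smul_eq_mul, mul_one]
    congr 1
    ext x
    simp [SimpleGraph.mem_neighborFinset, and_comm]
  simp only [h A B, h B A]
  rw [Finset.sum_comm]
  congr 1
  ext w
  congr 1
  ext u
  simp [SimpleGraph.adj_comm]

section Equality

variable {Δ γ : ℕ} (hconn : G.Connected) (hdeg : ∀ u, G.degree u ≤ Δ)
  (h3 : 3 ≤ Δ) (hγ : 2 ≤ γ) {v : V}
  (hfull : (gball G v γ).card = 1 + Δ * ∑ i ∈ Finset.range γ, (Δ - 1) ^ i)

include hconn hdeg h3 hγ hfull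

lemma lvl_card_eq : ∀ i, 1 ≤ i → i ≤ γ → (lvl G v i).card = Δ * (Δ - 1) ^ (i - 1) := by
  have hsum : ∑ i ∈ Finset.range γ, (lvl G v (i + 1)).card
      = ∑ i ∈ Finset.range γ, Δ * (Δ - 1) ^ i := by
    have h1 := card_gball (G := G) v γ
    rw [Finset.sum_range_succ', lvl_zero hconn, Finset.card_singleton] at h1
    rw [hfull, Finset.mul_sum] at h1
    have hle : ∀ i ∈ Finset.range γ, (lvl G v (i + 1)).card ≤ Δ * (Δ - 1) ^ i := by
      intro i _
      simpa using lvl_card_le hconn hdeg v (i + 1) (by omega)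
    have := (Finset.sum_eq_sum_iff_of_le hle).mp (by rw [Finset.mul_sum] at *; omega)
    exact Finset.sum_congr rfl this
  intro i hi1 hiγ
  have hle : ∀ j ∈ Finset.range γ, (lvl G v (j + 1)).card ≤ Δ * (Δ - 1) ^ j := by
    intro j _
    simpa using lvl_card_le hconn hdeg v (j + 1) (by omega)
  have := (Finset.sum_eq_sum_iff_of_le hle).mp hsum (i - 1) (by rw [Finset.mem_range]; omega)
  rw [show i - 1 + 1 = i by omega] at this
  exact this

lemma up_card_eq : ∀ i, 1 ≤ i → i + 1 ≤ γ → ∀ w ∈ lvl G v i,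
    ((G.neighborFinset w) ∩ lvl G v (i + 1)).card = Δ - 1 := by
  intro i hi1 hiγ
  have hsumle : ∀ w ∈ lvl G v i, ((G.neighborFinset w) ∩ lvl G v (i + 1)).card ≤ Δ - 1 :=
    fun w hw => nbr_up_le hconn hdeg hi1 hw
  have hchain : ∑ w ∈ lvl G v i, ((G.neighborFinset w) ∩ lvl G v (i + 1)).card
      = (Δ - 1) * (lvl G v i).card := by
    have hlow : (lvl G v (i + 1)).card
        ≤ ∑ w ∈ lvl G v i, ((G.neighborFinset w) ∩ lvl G v (i + 1)).card :=
      le_trans (Finset.card_le_card (lvl_subset_biUnion hconn v i)) Finset.card_biUnion_le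
    have hhigh : ∑ w ∈ lvl G v i, ((G.neighborFinset w) ∩ lvl G v (i + 1)).card
        ≤ (Δ - 1) * (lvl G v i).card := by
      calc _ ≤ ∑ _w ∈ lvl G v i, (Δ - 1) := Finset.sum_le_sum hsumle
        _ = _ := by rw [Finset.sum_const, smul_eq_mul, Nat.mul_comm]
    have hc1 : (lvl G v i).card = Δ * (Δ - 1) ^ (i - 1) :=
      lvl_card_eq hconn hdeg h3 hγ hfull i hi1 (by omega)
    have hc2 : (lvl G v (i + 1)).card = Δ * (Δ - 1) ^ i :=
      lvl_card_eq hconn hdeg h3 hγ hfull (i + 1) (by omega) hiγ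
    have hpow : (Δ - 1) * (Δ * (Δ - 1) ^ (i - 1)) = Δ * (Δ - 1) ^ i := by
      conv_rhs => rw [show i = (i - 1) + 1 by omega, pow_succ]
      ring
    rw [hc2] at hlow
    rw [hc1] at hhigh
    rw [hpow] at hhigh
    rw [hc1, hpow]
    omega
  intro w hw
  have := (Finset.sum_eq_sum_iff_of_le hsumle).mp (by
    rw [hchain, Finset.sum_const, smul_eq_mul, Nat.mul_comm]) w hw
  exact this

lemma down_card_eq : ∀ i, 1 ≤ i → i ≤ γ → ∀ u ∈ lvl G v i,
    ((G.neighborFinset u) ∩ lvl G v (i - 1)).card = 1 := by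
  intro i hi1 hiγ
  have hge : ∀ u ∈ lvl G v i, 1 ≤ ((G.neighborFinset u) ∩ lvl G v (i - 1)).card := by
    intro u hu
    rw [mem_lvl] at hu
    obtain ⟨w, hw, hwd⟩ := exists_down (hconn v u) (by omega)
    apply Finset.card_pos.mpr
    exact ⟨w, by
      rw [Finset.mem_inter, SimpleGraph.mem_neighborFinset, mem_lvl]
      exact ⟨hw.symm, by omega⟩⟩
  rcases Nat.lt_or_ge i 2 with h2 | h2
  · -- i = 1
    have hi : i = 1 := by omega
    subst hi
    intro u hu
    have hv : v ∈ (G.neighborFinset u) ∩ lvl G v 0 := by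
      rw [Finset.mem_inter, SimpleGraph.mem_neighborFinset, mem_lvl]
      refine ⟨?_, (hconn.dist_eq_zero_iff).mpr rfl⟩
      have := mem_lvl.mp hu
      exact (SimpleGraph.dist_eq_one_iff_adj.mp this).symm
    have hsub : (G.neighborFinset u) ∩ lvl G v 0 ⊆ {v} := by
      rw [lvl_zero hconn]
      exact Finset.inter_subset_right
    have h1 := Finset.card_le_card hsub
    have h2 := hge u hu
    simp only [Finset.card_singleton] at h1
    simp only [show (1:ℕ) - 1 = 0 from rfl] at h2 ⊢
    omega
  · -- i ≥ 2 : double counting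
    have hup := up_card_eq hconn hdeg h3 hγ hfull (i - 1) (by omega) (by omega)
    rw [show i - 1 + 1 = i by omega] at hup
    have hdc : ∑ u ∈ lvl G v i, ((G.neighborFinset u) ∩ lvl G v (i - 1)).card
        = ∑ w ∈ lvl G v (i - 1), ((G.neighborFinset w) ∩ lvl G v i).card :=
      sum_inter_comm _ _
    have hconst : ∑ w ∈ lvl G v (i - 1), ((G.neighborFinset w) ∩ lvl G v i).card
        = (Δ - 1) * (lvl G v (i - 1)).card := by
      rw [Finset.sum_congr rfl hup, Finset.sum_const, smul_eq_mul, Nat.mul_comm]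
    have hc1 : (lvl G v (i - 1)).card = Δ * (Δ - 1) ^ (i - 1 - 1) :=
      lvl_card_eq hconn hdeg h3 hγ hfull (i - 1) (by omega) (by omega)
    have hc2 : (lvl G v i).card = Δ * (Δ - 1) ^ (i - 1) :=
      lvl_card_eq hconn hdeg h3 hγ hfull i (by omega) hiγ
    have hpow : (Δ - 1) * (Δ * (Δ - 1) ^ (i - 1 - 1)) = Δ * (Δ - 1) ^ (i - 1) := by
      conv_rhs => rw [show i - 1 = (i - 1 - 1) + 1 by omega, pow_succ]
      ring
    have hsum : ∑ u ∈ lvl G v i, ((G.neighborFinset u) ∩ lvl G v (i - 1)).card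
        = (lvl G v i).card := by
      rw [hdc, hconst, hc1, hpow, hc2]
    -- each term ≥ 1 and the total is the cardinality, so each term is 1
    have := (Finset.sum_eq_sum_iff_of_le hge).mp (by
      rw [hsum]
      exact (Finset.card_eq_sum_ones _).symm)
    intro u hu
    exact (this u hu).symm

/-- no edges inside a level, for levels `1 ≤ i ≤ γ - 1`; also the degree is Δ there -/
lemma intra_card_zero : ∀ i, 1 ≤ i → i + 1 ≤ γ → ∀ u ∈ lvl G v i,
    ((G.neighborFinset u) ∩ lvl G v i).card = 0 := by
  intro i hi1 hiγ u hu
  have hdown := down_card_eq hconn hdeg h3 hγ hfull i hi1 (by omega) u hu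
  have hup := up_card_eq hconn hdeg h3 hγ hfull i hi1 hiγ u hu
  have husub : G.neighborFinset u ⊆
      ((G.neighborFinset u) ∩ lvl G v (i - 1)) ∪ ((G.neighborFinset u) ∩ lvl G v i)
        ∪ ((G.neighborFinset u) ∩ lvl G v (i + 1)) := by
    intro w hw
    have hadj : G.Adj u w := (SimpleGraph.mem_neighborFinset _ _ _).mp hw
    have hd1 : G.dist v w ≤ G.dist v u + 1 := by
      have := dist_triangle' (hconn v u) hadj.reachable
      have h1 : G.dist u w = 1 := SimpleGraph.dist_eq_one_iff_adj.mpr hadj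
      omega
    have hd2 : G.dist v u ≤ G.dist v w + 1 := by
      have := dist_triangle' (hconn v w) hadj.symm.reachable
      have h1 : G.dist w u = 1 := SimpleGraph.dist_eq_one_iff_adj.mpr hadj.symm
      omega
    have hdu := mem_lvl.mp hu
    simp only [Finset.mem_union, Finset.mem_inter, mem_lvl]
    rcases Nat.lt_trichotomy (G.dist v w) i with h | h | h
    · exact Or.inl (Or.inl ⟨hw, by omega⟩)
    · exact Or.inl (Or.inr ⟨hw, h⟩)
    · exact Or.inr ⟨hw, by omega⟩
  have hdisj1 : Disjoint ((G.neighborFinset u) ∩ lvl G v (i - 1))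
      ((G.neighborFinset u) ∩ lvl G v i) := by
    simp only [Finset.disjoint_left, Finset.mem_inter, mem_lvl]
    rintro x ⟨_, hx⟩ ⟨_, hx'⟩
    omega
  have hdisj2 : Disjoint (((G.neighborFinset u) ∩ lvl G v (i - 1))
      ∪ ((G.neighborFinset u) ∩ lvl G v i)) ((G.neighborFinset u) ∩ lvl G v (i + 1)) := by
    simp only [Finset.disjoint_left, Finset.mem_union, Finset.mem_inter, mem_lvl]
    rintro x (⟨_, hx⟩ | ⟨_, hx⟩) ⟨_, hx'⟩ <;> omega
  have hsup : (((G.neighborFinset u) ∩ lvl G v (i - 1)) ∪ ((G.neighborFinset u) ∩ lvl G v i))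
      ∪ ((G.neighborFinset u) ∩ lvl G v (i + 1)) ⊆ G.neighborFinset u := by
    intro x hx
    simp only [Finset.mem_union, Finset.mem_inter] at hx
    tauto
  have hcard := Finset.card_le_card hsup
  rw [Finset.card_union_of_disjoint hdisj2, Finset.card_union_of_disjoint hdisj1,
    hdown, hup] at hcard
  have hdegu : G.degree u ≤ Δ := hdeg u
  rw [← SimpleGraph.card_neighborFinset_eq_degree] at hdegu
  omega

end Equality
end MooreAux


open SimpleGraph Finset

namespace MooreAux

variable {V : Type*} [Fintype V] [DecidableEq V] {G : SimpleGraph V} [DecidableRel G.Adj]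
set_option linter.unusedSectionVars false

lemma cycle_getVert_ne {a : V} {c : G.Walk a a} (hc : c.IsCycle) {i j : ℕ}
    (h1 : 1 ≤ i) (hij : i < j) (hj : j ≤ c.length) : c.getVert i ≠ c.getVert j := by
  have hnd : c.support.tail.Nodup := hc.2
  have hsupp := support_eq_map c
  rw [List.range_succ_eq_map, List.map_cons, List.map_map] at hsupp
  rw [hsupp] at hnd
  simp only [List.tail_cons] at hnd
  have hinj := List.inj_on_of_nodup_map hnd
  intro hEq
  have := hinj (x := i - 1) (by rw [List.mem_range]; omega) (y := j - 1)
    (by rw [List.mem_range]; omega)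
    (by
      simp only [Function.comp]
      rw [show (i - 1).succ = i by omega, show (j - 1).succ = j by omega]
      exact hEq)
  omega

section NoShort

variable {Δ γ : ℕ} (hconn : G.Connected) (hdeg : ∀ u, G.degree u ≤ Δ)
  (h3 : 3 ≤ Δ) (hγ : 2 ≤ γ)
  (hfull : ∀ v : V, (gball G v γ).card = 1 + Δ * ∑ i ∈ Finset.range γ, (Δ - 1) ^ i)

include hconn hdeg h3 hγ hfull

lemma no_short_cycle (a : V) (c : G.Walk a a) (hc : c.IsCycle) :
    2 * γ + 1 ≤ c.length := by
  by_contra hlt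
  push_neg at hlt
  set ℓ := c.length with hℓ
  have hl3 : 3 ≤ ℓ := hc.three_le_length
  set d : ℕ → ℕ := fun j => G.dist a (c.getVert j) with hd
  have hd0 : d 0 = 0 := by
    show G.dist a (c.getVert 0) = 0
    rw [c.getVert_zero]
    exact (hconn.dist_eq_zero_iff).mpr rfl
  have hdl : d ℓ = 0 := by
    show G.dist a (c.getVert c.length) = 0
    rw [c.getVert_length]
    exact (hconn.dist_eq_zero_iff).mpr rfl
  have hdj_le : ∀ j, d j ≤ j := fun j => dist_getVert_le c j
  have hdj_le' : ∀ j, d j ≤ ℓ - j := by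
    intro j
    have := dist_getVert_to_end c j
    rw [SimpleGraph.dist_comm] at this
    exact this
  have hstep : ∀ j, j < ℓ → d (j + 1) ≤ d j + 1 ∧ d j ≤ d (j + 1) + 1 := by
    intro j hj
    have hadj := c.adj_getVert_succ hj
    have h1 : G.dist (c.getVert j) (c.getVert (j + 1)) = 1 :=
      SimpleGraph.dist_eq_one_iff_adj.mpr hadj
    have h2 : G.dist (c.getVert (j + 1)) (c.getVert j) = 1 :=
      SimpleGraph.dist_eq_one_iff_adj.mpr hadj.symm
    constructor
    · have := dist_triangle' (hconn a (c.getVert j)) hadj.reachable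
      simp only [hd]; omega
    · have := dist_triangle' (hconn a (c.getVert (j + 1))) hadj.symm.reachable
      simp only [hd]; omega
  set m := Finset.sup (Finset.range (ℓ + 1)) d with hm
  have hattain : ∃ j, d j = m := by
    obtain ⟨j, hj, hjeq⟩ := Finset.exists_mem_eq_sup (Finset.range (ℓ + 1)) (by simp) d
    exact ⟨j, hjeq.symm⟩
  set js := Nat.find hattain with hjs
  have hjsm : d js = m := Nat.find_spec hattain
  have hle_sup : ∀ j, j ≤ ℓ → d j ≤ m :=
    fun j hj => Finset.le_sup (by rw [Finset.mem_range]; omega)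
  have hm1 : 1 ≤ m := by
    have hd1 : d 1 = 1 := by
      apply SimpleGraph.dist_eq_one_iff_adj.mpr
      have := c.adj_getVert_succ (show 0 < ℓ by omega)
      rwa [SimpleGraph.Walk.getVert_zero] at this
    have := hle_sup 1 (by omega)
    omega
  have hjsl : js ≤ ℓ := by
    obtain ⟨j, hj, hjeq⟩ := Finset.exists_mem_eq_sup (Finset.range (ℓ + 1)) (by simp) d
    have := Nat.find_min' hattain hjeq.symm
    rw [Finset.mem_range] at hj
    omega
  have hjs1 : 1 ≤ js := by
    rcases Nat.eq_zero_or_pos js with h | h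
    · rw [h] at hjsm; omega
    · exact h
  have hjsl' : js ≤ ℓ - 1 := by
    rcases Nat.lt_or_ge js ℓ with h | h
    · omega
    · have : js = ℓ := by omega
      rw [this] at hjsm; omega
  have hmγ : m ≤ γ := by
    have h1 := hdj_le js
    have h2 := hdj_le' js
    omega
  have hprev : d (js - 1) = m - 1 := by
    have h1 : d (js - 1) ≤ m := hle_sup _ (by omega)
    have h2 : d (js - 1) ≠ m := fun h => Nat.find_min hattain (by omega) h
    have hst := (hstep (js - 1) (by omega)).1
    rw [show js - 1 + 1 = js by omega] at hst
    omega
  have hnext_le : d (js + 1) ≤ m := hle_sup _ (by omega)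
  have hnext_ge : m - 1 ≤ d (js + 1) := by
    have := (hstep js (by omega)).2
    omega
  have humem : c.getVert js ∈ lvl G a m := mem_lvl.mpr hjsm
  rcases Nat.eq_or_lt_of_le hnext_le with hflat | hdown
  · -- flat step at the top
    rcases Nat.lt_or_ge m γ with hmlt | hmge
    · -- m ≤ γ - 1 : no intra-level edges
      have hzero := intra_card_zero hconn hdeg h3 hγ (hfull a) m hm1 (by omega) _ humem
      have : c.getVert (js + 1) ∈ (G.neighborFinset (c.getVert js)) ∩ lvl G a m := by
        rw [Finset.mem_inter, SimpleGraph.mem_neighborFinset, mem_lvl]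
        exact ⟨c.adj_getVert_succ (by omega), hflat⟩
      have := Finset.card_pos.mpr ⟨_, this⟩
      omega
    · -- m = γ : the walk is too short
      have h1 := hdj_le js
      have h2 := hdj_le' (js + 1)
      omega
  · -- descent on both sides: two down-neighbours must coincide
    have hnext : d (js + 1) = m - 1 := by omega
    have hone := down_card_eq hconn hdeg h3 hγ (hfull a) m hm1 hmγ _ humem
    have hw1 : c.getVert (js - 1) ∈ (G.neighborFinset (c.getVert js)) ∩ lvl G a (m - 1) := by
      rw [Finset.mem_inter, SimpleGraph.mem_neighborFinset, mem_lvl]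
      have := c.adj_getVert_succ (show js - 1 < ℓ by omega)
      rw [show js - 1 + 1 = js by omega] at this
      exact ⟨this.symm, hprev⟩
    have hw2 : c.getVert (js + 1) ∈ (G.neighborFinset (c.getVert js)) ∩ lvl G a (m - 1) := by
      rw [Finset.mem_inter, SimpleGraph.mem_neighborFinset, mem_lvl]
      exact ⟨c.adj_getVert_succ (by omega), hnext⟩
    have hEq : c.getVert (js - 1) = c.getVert (js + 1) := by
      have hcard1 : ((G.neighborFinset (c.getVert js)) ∩ lvl G a (m - 1)).card ≤ 1 := by omega
      exact Finset.card_le_one.mp hcard1 _ hw1 _ hw2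
    rcases Nat.lt_or_ge 1 js with h | h
    · exact cycle_getVert_ne hc (show 1 ≤ js - 1 by omega) (show js - 1 < js + 1 by omega)
        (by omega) hEq
    · -- js = 1 : compare index 2 with index ℓ
      have hjs1' : js = 1 := by omega
      rw [hjs1'] at hEq
      simp only [show (1 : ℕ) - 1 = 0 from rfl, SimpleGraph.Walk.getVert_zero] at hEq
      have hl : c.getVert ℓ = a := by rw [hℓ]; exact c.getVert_length
      have := cycle_getVert_ne hc (show 1 ≤ 1 + 1 by omega) (show 1 + 1 < ℓ by
        -- if ℓ = 3 then getVert 2 = getVert (js+1) = getVert 0 = a = getVert 3 contradicts nodup?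
        rcases Nat.lt_or_ge (1 + 1) ℓ with h' | h'
        · exact h'
        · exfalso
          have hl2 : ℓ = 3 := by omega
          -- then getVert 2 = a; but getVert 2 ≠ getVert 3 = a
          have := cycle_getVert_ne hc (show 1 ≤ 2 by omega) (show 2 < 3 by omega) (by omega)
          rw [← hl2] at this
          exact this (hEq.symm.trans hl.symm)) (le_refl ℓ)
      exact this (hEq.symm.trans hl.symm)
  
end NoShort
end MooreAux


open SimpleGraph Finset

namespace MooreAux

variable {V : Type*} [Fintype V] [DecidableEq V] {G : SimpleGraph V} [DecidableRel G.Adj]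
set_option linter.unusedSectionVars false

lemma power_adj {γ : ℕ} {u w : V} :
    (G.power γ).Adj u w ↔ u ≠ w ∧ G.Reachable u w ∧ G.dist u w ≤ γ := Iff.rfl

lemma le_power {γ : ℕ} (hγ : 1 ≤ γ) : G ≤ G.power γ := by
  intro u w h
  exact ⟨h.ne, h.reachable, by rw [SimpleGraph.dist_eq_one_iff_adj.mpr h]; omega⟩

lemma power_connected {γ : ℕ} (hγ : 1 ≤ γ) (hconn : G.Connected) :
    (G.power γ).Connected := hconn.mono (le_power hγ)

lemma power_neighborFinset {γ : ℕ} (hconn : G.Connected) (v : V) :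
    (G.power γ).neighborFinset v = (gball G v γ).erase v := by
  ext u
  rw [SimpleGraph.mem_neighborFinset, power_adj, Finset.mem_erase, mem_gball]
  constructor
  · rintro ⟨h1, _, h3⟩; exact ⟨Ne.symm h1, h3⟩
  · rintro ⟨h1, h2⟩; exact ⟨Ne.symm h1, hconn v u, h2⟩

lemma power_degree {γ : ℕ} (hconn : G.Connected) (v : V) :
    (G.power γ).degree v = (gball G v γ).card - 1 := by
  rw [← SimpleGraph.card_neighborFinset_eq_degree, power_neighborFinset hconn,
    Finset.card_erase_of_mem (mem_gball.mpr (by simp [(hconn.dist_eq_zero_iff).mpr rfl]))]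

/-- distances are bounded by `card - 1` -/
lemma dist_le_card {H : SimpleGraph V} {u w : V} (hr : H.Reachable u w) :
    H.dist u w ≤ Fintype.card V - 1 := by
  obtain ⟨p, hp⟩ := hr.exists_walk_length_eq_dist
  have := (geodesic_isPath p hp).length_lt
  omega

/-- a connected graph with maximum degree `≤ M` and one vertex of degree `< M`
is `M`-colourable (easy part of Brooks' theorem). -/
lemma colorable_of_low_vertex (H : SimpleGraph V) [DecidableRel H.Adj] (hc : H.Connected)
    {M : ℕ} (hdegle : ∀ u, H.degree u ≤ M) (v₀ : V) (hv₀ : H.degree v₀ < M) :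
    H.Colorable M := by
  classical
  set n := Fintype.card V with hn
  have hn1 : 1 ≤ n := Fintype.card_pos_iff.mpr hc.nonempty
  set idx : V → ℕ := fun x => (Fintype.equivFin V x : ℕ) with hidx
  have hidxlt : ∀ x, idx x < n := fun x => (Fintype.equivFin V x).2
  have hidxinj : Function.Injective idx := fun x y h =>
    (Fintype.equivFin V).injective (Fin.ext h)
  set r : V → ℕ := fun x => ((n + 1) - H.dist x v₀) * n + idx x with hr
  have hrinj : Function.Injective r := by
    intro x y hxy
    simp only [hr] at hxy
    have hx := hidxlt x
    have hy := hidxlt y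
    exact hidxinj (rank_inj_aux hx hy hxy).2
  apply greedy_colorable H r hrinj M
  intro x
  rcases eq_or_ne x v₀ with rfl | hx
  · calc ((H.neighborFinset x).filter (fun u => r u < r x)).card
        ≤ (H.neighborFinset x).card := Finset.card_le_card (Finset.filter_subset _ _)
      _ = H.degree x := SimpleGraph.card_neighborFinset_eq_degree _ _
      _ < M := hv₀
  · -- x has a neighbour strictly closer to v₀, whose rank is larger
    have hdx : H.dist x v₀ ≠ 0 := by
      rw [ne_eq, (hc x v₀).dist_eq_zero_iff]
      exact hx
    obtain ⟨p, hp⟩ := (hc x v₀).exists_walk_length_eq_dist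
    have hplen : 0 < p.length := by omega
    set w := p.getVert 1 with hw
    have hadjxw : H.Adj x w := by
      have := p.adj_getVert_succ hplen
      rwa [p.getVert_zero] at this
    have hwd : H.dist w v₀ < H.dist x v₀ := by
      have h1 := dist_getVert_to_end p 1
      rw [← hw] at h1
      omega
    have hrw : r x < r w := by
      have hkey : ((n + 1) - H.dist x v₀) < ((n + 1) - H.dist w v₀) := by
        have h1 : H.dist x v₀ ≤ n - 1 := dist_le_card (hc x v₀)
        omega
      exact rank_lt hkey (hidxlt x)
    have hsub : ((H.neighborFinset x).filter (fun u => r u < r x))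
        ⊆ (H.neighborFinset x).erase w := by
      intro y hy
      rw [Finset.mem_filter] at hy
      refine Finset.mem_erase.mpr ⟨fun h => ?_, hy.1⟩
      subst h
      omega
    calc ((H.neighborFinset x).filter (fun u => r u < r x)).card
        ≤ ((H.neighborFinset x).erase w).card := Finset.card_le_card hsub
      _ = H.degree x - 1 := by
          rw [Finset.card_erase_of_mem (SimpleGraph.mem_neighborFinset _ _ _ |>.mpr hadjxw),
            SimpleGraph.card_neighborFinset_eq_degree]
      _ < M := by have := hdegle x; have h1 := SimpleGraph.degree_pos_iff_exists_adj H x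
                  have : 0 < H.degree x := by
                    rw [h1]; exact ⟨w, hadjxw⟩
                  omega

end MooreAux


open SimpleGraph Finset

namespace MooreAux

variable {V : Type*} [Fintype V] [DecidableEq V] {G : SimpleGraph V} [DecidableRel G.Adj]
set_option linter.unusedSectionVars false

/-- `H` with the vertices `a, b` made isolated. -/
def auxMinus (H : SimpleGraph V) (a b : V) : SimpleGraph V where
  Adj x y := H.Adj x y ∧ x ≠ a ∧ x ≠ b ∧ y ≠ a ∧ y ≠ b
  symm := ⟨by rintro x y ⟨h1, h2, h3, h4, h5⟩; exact ⟨h1.symm, h4, h5, h2, h3⟩⟩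
  loopless := ⟨fun x h => (H.ne_of_adj h.1) rfl⟩

/-- `H` with `b` deleted (isolated) and its edges transferred to `a`. -/
def auxStar (H : SimpleGraph V) (a b : V) : SimpleGraph V where
  Adj x y := x ≠ y ∧ x ≠ b ∧ y ≠ b ∧
    (H.Adj x y ∨ (x = a ∧ H.Adj b y) ∨ (y = a ∧ H.Adj x b))
  symm := ⟨by
    rintro x y ⟨h1, h2, h3, h4⟩
    refine ⟨h1.symm, h3, h2, ?_⟩
    rcases h4 with h | ⟨h, h'⟩ | ⟨h, h'⟩
    · exact Or.inl h.symm
    · exact Or.inr (Or.inr ⟨h, h'.symm⟩)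
    · exact Or.inr (Or.inl ⟨h, h'.symm⟩)⟩
  loopless := ⟨fun x h => h.1 rfl⟩

lemma colorable_of_star {H : SimpleGraph V} {a b : V} (hne : a ≠ b) (hnadj : ¬ H.Adj a b)
    {M : ℕ} (h : (auxStar H a b).Colorable M) : H.Colorable M := by
  obtain ⟨C⟩ := h
  refine ⟨SimpleGraph.Coloring.mk (fun x => if x = b then C a else C x) ?_⟩
  intro x y hxy
  by_cases hxb : x = b
  · by_cases hya : y = a
    · exact absurd (by rw [hxb, hya] at hxy; exact hxy.symm) hnadj
    · have hyb : y ≠ b := fun h => (H.ne_of_adj hxy) (hxb.trans h.symm)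
      have hadj : (auxStar H a b).Adj a y :=
        ⟨fun h => hya h.symm, hne, hyb, Or.inr (Or.inl ⟨rfl, by rw [hxb] at hxy; exact hxy⟩)⟩
      have hval := C.valid hadj
      simp only [if_pos hxb, if_neg hyb]
      exact hval
  · by_cases hyb : y = b
    · have hxa : x ≠ a := fun h => hnadj (by rw [← h, ← hyb]; exact hxy)
      have hadj : (auxStar H a b).Adj a x :=
        ⟨fun h => hxa h.symm, hne, hxb,
          Or.inr (Or.inl ⟨rfl, by rw [hyb] at hxy; exact hxy.symm⟩)⟩
      have hval := C.valid hadj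
      simp only [if_neg hxb, if_pos hyb]
      exact fun hEq => hval hEq.symm
    · have hadj : (auxStar H a b).Adj x y := ⟨H.ne_of_adj hxy, hxb, hyb, Or.inl hxy⟩
      have hval := C.valid hadj
      simp only [if_neg hxb, if_neg hyb]
      exact hval

section Lovasz

variable {γ M : ℕ} (hconn : G.Connected) (hγ : 2 ≤ γ) (hM : 1 ≤ M)
  (hregH : ∀ u : V, (G.power γ).degree u = M)
  {a b cc : V} (hab : G.dist a b = γ + 1) (hca : G.dist cc a = 1) (hcb : G.dist cc b = γ)

include hconn hγ hM hregH hab hca hcb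

lemma colorable_of_far_pair : (G.power γ).Colorable M := by
  classical
  set H := G.power γ with hH
  have hHadj : ∀ u w : V, H.Adj u w ↔ u ≠ w ∧ G.dist u w ≤ γ := by
    intro u w
    rw [hH, power_adj]
    exact ⟨fun ⟨h1, _, h3⟩ => ⟨h1, h3⟩, fun ⟨h1, h3⟩ => ⟨h1, hconn u w, h3⟩⟩
  have hne_of_dist : ∀ (u w : V) (k : ℕ), G.dist u w = k → k ≠ 0 → u ≠ w := by
    rintro u w k hk hk0 rfl
    exact hk0 (by rw [← hk, (hconn.dist_eq_zero_iff).mpr rfl])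
  have haneb : a ≠ b := hne_of_dist a b (γ + 1) hab (by omega)
  have hnadjG : ¬ G.Adj a b := fun h => by
    rw [← SimpleGraph.dist_eq_one_iff_adj] at h; omega
  have hnadjH : ¬ H.Adj a b := fun h => by
    rw [hHadj] at h; omega
  have hcca : cc ≠ a := hne_of_dist cc a 1 hca (by omega)
  have hccb : cc ≠ b := hne_of_dist cc b γ hcb (by omega)
  have hHca : H.Adj cc a := (hHadj cc a).mpr ⟨hcca, by omega⟩
  have hHcb : H.Adj cc b := (hHadj cc b).mpr ⟨hccb, by omega⟩
  set H'' := auxMinus H a b with hH''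
  have hH''adj : ∀ u w : V, H''.Adj u w ↔
      (H.Adj u w ∧ u ≠ a ∧ u ≠ b ∧ w ≠ a ∧ w ≠ b) := fun u w => Iff.rfl
  -- every vertex other than a, b reaches cc in H''
  have reach'' : ∀ u, u ≠ a → u ≠ b → H''.Reachable u cc := by
    have main : ∀ d u, u ≠ a → u ≠ b → G.dist u cc = d → H''.Reachable u cc := by
      intro d
      induction d using Nat.strong_induction_on with
      | _ d ih =>
        intro u hua hub hd
        rcases Nat.eq_zero_or_pos d with rfl | hdpos
        · have : u = cc := (hconn u cc).dist_eq_zero_iff.mp hd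
          exact this ▸ Reachable.refl u
        obtain ⟨p, hp⟩ := (hconn u cc).exists_walk_length_eq_dist
        rw [hd] at hp
        have hux : G.Adj u (p.getVert 1) := by
          have := p.adj_getVert_succ (show 0 < p.length by omega)
          rwa [p.getVert_zero] at this
        have hdx : G.dist (p.getVert 1) cc = d - 1 := by
          have h1 := dist_getVert_to_end p 1
          have h2 := dist_triangle' (G := G) hux.reachable (hconn _ cc)
          have h3 : G.dist u (p.getVert 1) = 1 := SimpleGraph.dist_eq_one_iff_adj.mpr hux
          omega
        by_cases hxab : p.getVert 1 = a ∨ p.getVert 1 = b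
        · -- jump over the removed vertex using a distance-2 hop
          have hxcc : p.getVert 1 ≠ cc := by
            rcases hxab with h | h <;> rw [h]
            · exact fun hEq => hcca hEq.symm
            · exact fun hEq => hccb hEq.symm
          have hd2 : 2 ≤ d := by
            have : G.dist (p.getVert 1) cc ≠ 0 := by
              rw [ne_eq, (hconn _ cc).dist_eq_zero_iff]
              exact hxcc
            omega
          have hxy : G.Adj (p.getVert 1) (p.getVert 2) := p.adj_getVert_succ (by omega)
          have hdy : G.dist (p.getVert 2) cc = d - 2 := by
            have h1 := dist_getVert_to_end p 2
            have h2 := dist_triangle' (G := G) (reachable_getVert p 2) (hconn _ cc)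
            have h3 := dist_getVert_le p 2
            omega
          have hduy : G.dist u (p.getVert 2) = 2 := geodesic_getVert p (by omega) (by omega)
          have hya : p.getVert 2 ≠ a := by
            rcases hxab with h | h
            · rw [h] at hxy; intro hEq; rw [hEq] at hxy; exact (G.ne_of_adj hxy) rfl
            · rw [h] at hxy; intro hEq; rw [hEq] at hxy; exact hnadjG hxy.symm
          have hyb : p.getVert 2 ≠ b := by
            rcases hxab with h | h
            · rw [h] at hxy; intro hEq; rw [hEq] at hxy; exact hnadjG hxy
            · rw [h] at hxy; intro hEq; rw [hEq] at hxy; exact (G.ne_of_adj hxy) rfl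
          have huy : u ≠ p.getVert 2 := by
            intro hEq
            rw [← hEq, (hconn u u).dist_eq_zero_iff.mpr rfl] at hduy
            omega
          have hH''uy : H''.Adj u (p.getVert 2) :=
            ⟨(hHadj _ _).mpr ⟨huy, by omega⟩, hua, hub, hya, hyb⟩
          exact hH''uy.reachable.trans (ih (d - 2) (by omega) _ hya hyb hdy)
        · push_neg at hxab
          have hux1 : G.dist u (p.getVert 1) = 1 := SimpleGraph.dist_eq_one_iff_adj.mpr hux
          have hH''ux : H''.Adj u (p.getVert 1) :=
            ⟨(hHadj _ _).mpr ⟨G.ne_of_adj hux, by omega⟩, hua, hub, hxab.1, hxab.2⟩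
          exact hH''ux.reachable.trans (ih (d - 1) (by omega) _ hxab.1 hxab.2 hdx)
    intro u hua hub
    exact main (G.dist u cc) u hua hub rfl
  -- every vertex other than a, b, cc has an H''-neighbour strictly closer to cc
  have hclose : ∀ u, u ≠ a → u ≠ b → u ≠ cc →
      ∃ w, H''.Adj u w ∧ H''.dist w cc < H''.dist u cc := by
    intro u hua hub hucc
    have hr := reach'' u hua hub
    have hd0 : H''.dist u cc ≠ 0 := by
      rw [ne_eq, hr.dist_eq_zero_iff]
      exact hucc
    obtain ⟨p, hp⟩ := hr.exists_walk_length_eq_dist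
    refine ⟨p.getVert 1, ?_, ?_⟩
    · have := p.adj_getVert_succ (show 0 < p.length by omega)
      rwa [p.getVert_zero] at this
    · have := dist_getVert_to_end p 1
      omega
  -- ranking
  set n := Fintype.card V with hn
  have hn1 : 1 ≤ n := Fintype.card_pos_iff.mpr hconn.nonempty
  set idx : V → ℕ := fun x => (Fintype.equivFin V x : ℕ) with hidx
  have hidxlt : ∀ x, idx x < n := fun x => (Fintype.equivFin V x).2
  have hidxinj : Function.Injective idx := fun x y h =>
    (Fintype.equivFin V).injective (Fin.ext h)
  classical
  set key : V → ℕ := fun x => if x = a ∨ x = b then 0 else (n + 1) - H''.dist x cc with hkey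
  set r : V → ℕ := fun x => key x * n + idx x with hr
  have hd''le : ∀ x, x ≠ a → x ≠ b → H''.dist x cc ≤ n - 1 :=
    fun x hxa hxb => dist_le_card (reach'' x hxa hxb)
  have hkey2 : ∀ x, x ≠ a → x ≠ b → 2 ≤ key x := by
    intro x hxa hxb
    have := hd''le x hxa hxb
    simp only [hkey, if_neg (by tauto : ¬(x = a ∨ x = b))]
    omega
  have hrinj : Function.Injective r := by
    intro x y hxy
    exact hidxinj (rank_inj_aux (hidxlt x) (hidxlt y) hxy).2
  have hMdeg : ∀ u : V, (H.neighborFinset u).card = M := by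
    intro u
    rw [SimpleGraph.card_neighborFinset_eq_degree]
    exact hregH u
  -- the greedy bound for auxStar
  set Hs := auxStar H a b with hHs
  letI : DecidableRel Hs.Adj := Classical.decRel _
  have hsadj : ∀ x y : V, Hs.Adj x y ↔ (x ≠ y ∧ x ≠ b ∧ y ≠ b ∧
      (H.Adj x y ∨ (x = a ∧ H.Adj b y) ∨ (y = a ∧ H.Adj x b))) := fun x y => Iff.rfl
  have hcolor : Hs.Colorable M := by
    apply greedy_colorable Hs r hrinj M
    intro x
    by_cases hxb : x = b
    · -- b is isolated in Hs
      have hempty : (Hs.neighborFinset x) = ∅ := by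
        ext y
        simp only [SimpleGraph.mem_neighborFinset, Finset.notMem_empty, iff_false]
        intro hadj
        exact ((hsadj x y).mp hadj).2.1 hxb
      rw [Finset.filter_congr_decidable, hempty]
      simp only [Finset.filter_empty, Finset.card_empty]; omega
    by_cases hxa : x = a
    · -- nothing is earlier than a
      have hempty : ((Hs.neighborFinset x).filter (fun u => r u < r x)) = ∅ := by
        ext y
        simp only [Finset.mem_filter, SimpleGraph.mem_neighborFinset, Finset.notMem_empty,
          iff_false, not_and]
        intro hadj hlt
        obtain ⟨hynex, _, hyb, _⟩ := (hsadj x y).mp hadj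
        have hya : y ≠ a := fun h => hynex (hxa.trans h.symm)
        have h2 := hkey2 y hya hyb
        have hra : r x = idx x := by
          simp only [hr, hkey, if_pos (Or.inl hxa)]
          omega
        have hry : 2 * n ≤ r y := by
          have : 2 * n ≤ key y * n := Nat.mul_le_mul_right n h2
          simp only [hr]
          omega
        have := hidxlt x
        omega
      rw [Finset.filter_congr_decidable] at hempty ⊢
      rw [hempty]
      simp only [Finset.filter_empty, Finset.card_empty]; omega
    by_cases hxcc : x = cc
    · -- cc : all its Hs-neighbours lie in N_H(cc) \ {b}
      have hsub : ((Hs.neighborFinset x).filter (fun u => r u < r x))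
          ⊆ (H.neighborFinset x).erase b := by
        intro y hy
        rw [Finset.mem_filter, SimpleGraph.mem_neighborFinset] at hy
        obtain ⟨hycc, hccb', hyb, hbr⟩ := (hsadj x y).mp hy.1
        rw [Finset.mem_erase, SimpleGraph.mem_neighborFinset]
        refine ⟨hyb, ?_⟩
        rcases hbr with h | ⟨h, _⟩ | ⟨h, _⟩
        · exact h
        · exact absurd (hxcc.symm.trans h) hcca
        · rw [h, hxcc]; exact hHca
      have hbmem : b ∈ H.neighborFinset x := by
        rw [SimpleGraph.mem_neighborFinset, hxcc]
        exact hHcb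
      have hcard := Finset.card_le_card hsub
      rw [Finset.card_erase_of_mem hbmem, hMdeg x] at hcard
      omega
    · -- generic vertex: it has a later neighbour
      obtain ⟨w, hw, hwd⟩ := hclose x hxa hxb hxcc
      obtain ⟨hHxw, hxa', hxb', hwa, hwb⟩ := (hH''adj x w).mp hw
      have hrxw : r x < r w := by
        have hk : key x < key w := by
          simp only [hkey, if_neg (by tauto : ¬(x = a ∨ x = b)),
            if_neg (by tauto : ¬(w = a ∨ w = b))]
          have h1 := hd''le x hxa hxb
          omega
        exact rank_lt hk (hidxlt x)
      by_cases hxbadj : H.Adj x b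
      · have hsub : ((Hs.neighborFinset x).filter (fun u => r u < r x))
            ⊆ (((H.neighborFinset x).erase b) ∪ {a}).erase w := by
          intro y hy
          rw [Finset.mem_filter, SimpleGraph.mem_neighborFinset] at hy
          obtain ⟨hyx, _, hyb, hbr⟩ := (hsadj x y).mp hy.1
          rw [Finset.mem_erase]
          constructor
          · intro hEq; subst hEq; omega
          rw [Finset.mem_union, Finset.mem_erase, SimpleGraph.mem_neighborFinset,
            Finset.mem_singleton]
          rcases hbr with h | ⟨h, _⟩ | ⟨h, _⟩
          · exact Or.inl ⟨hyb, h⟩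
          · exact absurd h hxa
          · exact Or.inr h
        have hwmem : w ∈ ((H.neighborFinset x).erase b) ∪ {a} := by
          rw [Finset.mem_union, Finset.mem_erase, SimpleGraph.mem_neighborFinset]
          exact Or.inl ⟨hwb, hHxw⟩
        have hcard := Finset.card_le_card hsub
        rw [Finset.card_erase_of_mem hwmem] at hcard
        have hu := Finset.card_union_le ((H.neighborFinset x).erase b) ({a} : Finset V)
        rw [Finset.card_erase_of_mem (SimpleGraph.mem_neighborFinset _ _ _ |>.mpr hxbadj),
          hMdeg x] at hu
        simp only [Finset.card_singleton] at hu
        omega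
      · have hsub : ((Hs.neighborFinset x).filter (fun u => r u < r x))
            ⊆ (H.neighborFinset x).erase w := by
          intro y hy
          rw [Finset.mem_filter, SimpleGraph.mem_neighborFinset] at hy
          obtain ⟨hyx, _, hyb, hbr⟩ := (hsadj x y).mp hy.1
          rw [Finset.mem_erase, SimpleGraph.mem_neighborFinset]
          constructor
          · intro hEq; subst hEq; omega
          rcases hbr with h | ⟨h, _⟩ | ⟨h, hxb2⟩
          · exact h
          · exact absurd h hxa
          · exact absurd hxb2 hxbadj
        have hcard := Finset.card_le_card hsub
        rw [Finset.card_erase_of_mem (SimpleGraph.mem_neighborFinset _ _ _ |>.mpr hHxw),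
          hMdeg x] at hcard
        omega
  exact colorable_of_star haneb hnadjH hcolor

end Lovasz
end MooreAux


open SimpleGraph Finset

namespace MooreAux

variable {V : Type*} [Fintype V] [DecidableEq V] {G : SimpleGraph V} [DecidableRel G.Adj]
set_option linter.unusedSectionVars false

section CycleExists

variable {Δ γ : ℕ} (hconn : G.Connected) (hdeg : ∀ u, G.degree u ≤ Δ)
  (h3 : 3 ≤ Δ) (hγ : 2 ≤ γ)
  (hfull : ∀ v : V, (gball G v γ).card = 1 + Δ * ∑ i ∈ Finset.range γ, (Δ - 1) ^ i)
  (hdistle : ∀ v u : V, G.dist v u ≤ γ)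

include hconn hdeg h3 hγ hfull hdistle

lemma exists_moore_cycle :
    ∃ (x : V) (w : G.Walk x x), w.IsCycle ∧ w.length ≤ 2 * γ + 1 := by
  classical
  obtain ⟨v⟩ := hconn.nonempty
  -- a vertex at distance γ
  have hlvlγ : (lvl G v γ).card = Δ * (Δ - 1) ^ (γ - 1) :=
    lvl_card_eq hconn hdeg h3 hγ (hfull v) γ (by omega) le_rfl
  have hpow1 : 1 ≤ (Δ - 1) ^ (γ - 1) := Nat.one_le_pow _ _ (by omega)
  obtain ⟨u, hu⟩ := Finset.card_pos.mp (by rw [hlvlγ]; exact Nat.mul_pos (by omega) (by omega))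
  have hudist : G.dist v u = γ := mem_lvl.mp hu
  -- degree of u is Δ
  have hdegu : (G.neighborFinset u).card = Δ := by
    have h1 : (lvl G u 1).card = Δ * (Δ - 1) ^ (1 - 1) :=
      lvl_card_eq hconn hdeg h3 hγ (hfull u) 1 le_rfl (by omega)
    rw [lvl_one] at h1
    simpa using h1
  -- u has a neighbour u' at level γ
  have hdown := down_card_eq hconn hdeg h3 hγ (hfull v) γ (by omega) le_rfl u hu
  have hup_ne : ((G.neighborFinset u) ∩ lvl G v γ).Nonempty := by
    by_contra hempty
    rw [Finset.not_nonempty_iff_eq_empty] at hempty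
    have hsub : G.neighborFinset u ⊆ (G.neighborFinset u) ∩ lvl G v (γ - 1) := by
      intro w hw
      have hadj : G.Adj u w := (SimpleGraph.mem_neighborFinset _ _ _).mp hw
      have hwle : G.dist v w ≤ γ := hdistle v w
      have hwge : γ ≤ G.dist v w + 1 := by
        have := dist_triangle' (hconn v w) hadj.symm.reachable
        have h1 : G.dist w u = 1 := SimpleGraph.dist_eq_one_iff_adj.mpr hadj.symm
        omega
      have : G.dist v w = γ ∨ G.dist v w = γ - 1 := by omega
      rcases this with h | h
      · exfalso
        have : w ∈ (G.neighborFinset u) ∩ lvl G v γ := by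
          rw [Finset.mem_inter]; exact ⟨hw, mem_lvl.mpr h⟩
        rw [hempty] at this
        exact absurd this (Finset.notMem_empty w)
      · rw [Finset.mem_inter]; exact ⟨hw, mem_lvl.mpr h⟩
    have := Finset.card_le_card hsub
    omega
  obtain ⟨u', hu'⟩ := hup_ne
  rw [Finset.mem_inter, SimpleGraph.mem_neighborFinset] at hu'
  obtain ⟨huadj, hu'lvl⟩ := hu'
  have hu'dist : G.dist v u' = γ := mem_lvl.mp hu'lvl
  have huu' : u ≠ u' := G.ne_of_adj huadj
  -- geodesics
  obtain ⟨p, hp⟩ := (hconn v u).exists_walk_length_eq_dist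
  obtain ⟨q, hq⟩ := (hconn v u').exists_walk_length_eq_dist
  rw [hudist] at hp
  rw [hu'dist] at hq
  -- last common index
  set K := (Finset.range (γ + 1)).filter (fun i => p.getVert i = q.getVert i) with hK
  have hK0 : 0 ∈ K := by
    rw [hK, Finset.mem_filter, Finset.mem_range]
    exact ⟨by omega, by rw [p.getVert_zero, q.getVert_zero]⟩
  set i0 := K.max' ⟨0, hK0⟩ with hi0
  have hi0mem : i0 ∈ K := K.max'_mem ⟨0, hK0⟩
  have hi0le : i0 < γ + 1 := Finset.mem_range.mp (Finset.mem_filter.mp hi0mem).1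
  have hi0eq : p.getVert i0 = q.getVert i0 := (Finset.mem_filter.mp hi0mem).2
  have hi0le' : i0 ≤ γ := by omega
  have hi0ne : i0 ≠ γ := by
    intro hEq
    have h1 : p.getVert γ = u := by
      rw [show γ = p.length from hp.symm]; exact p.getVert_length
    have h2 : q.getVert γ = u' := by
      rw [show γ = q.length from hq.symm]; exact q.getVert_length
    rw [hEq, h1, h2] at hi0eq
    exact huu' hi0eq
  set x := p.getVert i0 with hx
  have hxlvl : G.dist v x = i0 := geodesic_getVert p (by rw [hp, hudist]) (by omega)
  have hxp : x ∈ p.support := by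
    rw [SimpleGraph.Walk.mem_support_iff_exists_getVert]
    exact ⟨i0, rfl, by omega⟩
  have hxq : x ∈ q.support := by
    rw [SimpleGraph.Walk.mem_support_iff_exists_getVert]
    exact ⟨i0, hi0eq.symm, by omega⟩
  set P1 := p.dropUntil x hxp with hP1
  set P2 := q.dropUntil x hxq with hP2
  -- lengths
  have hsplit1 : (p.takeUntil x hxp).length + P1.length = γ := by
    have h := congrArg SimpleGraph.Walk.length (p.take_spec hxp)
    rw [SimpleGraph.Walk.length_append] at h
    rw [← hP1] at h
    omega
  have htake1 : i0 ≤ (p.takeUntil x hxp).length := by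
    have := SimpleGraph.dist_le (p.takeUntil x hxp)
    omega
  have hdxu : γ ≤ i0 + G.dist x u := by
    have := dist_triangle' (hconn v x) (hconn x u)
    omega
  have hdropd : G.dist x u ≤ P1.length := SimpleGraph.dist_le P1
  have hP1len : P1.length = γ - i0 := by omega
  have hP1geo : P1.length = G.dist x u := by omega
  have hsplit2 : (q.takeUntil x hxq).length + P2.length = γ := by
    have h := congrArg SimpleGraph.Walk.length (q.take_spec hxq)
    rw [SimpleGraph.Walk.length_append] at h
    rw [← hP2] at h
    omega
  have htake2 : i0 ≤ (q.takeUntil x hxq).length := by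
    have := SimpleGraph.dist_le (q.takeUntil x hxq)
    omega
  have hdxu' : γ ≤ i0 + G.dist x u' := by
    have := dist_triangle' (hconn v x) (hconn x u')
    omega
  have hdropd2 : G.dist x u' ≤ P2.length := SimpleGraph.dist_le P2
  have hP2len : P2.length = γ - i0 := by omega
  have hP2geo : P2.length = G.dist x u' := by omega
  have hP1path : P1.IsPath := geodesic_isPath P1 hP1geo
  have hP2path : P2.IsPath := geodesic_isPath P2 hP2geo
  -- levels along the two arms
  have hlevP1 : ∀ j ≤ P1.length, G.dist v (P1.getVert j) = i0 + j := by
    intro j hj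
    have hle : G.dist v (P1.getVert j) ≤ i0 + j := by
      have h1 := dist_getVert_le P1 j
      have h2 := dist_triangle' (hconn v x) (reachable_getVert P1 j)
      omega
    have hge : i0 + j ≤ G.dist v (P1.getVert j) := by
      have h1 := dist_getVert_to_end P1 j
      have h2 := dist_triangle' (hconn v (P1.getVert j)) (hconn (P1.getVert j) u)
      omega
    omega
  have hlevP2 : ∀ j ≤ P2.length, G.dist v (P2.getVert j) = i0 + j := by
    intro j hj
    have hle : G.dist v (P2.getVert j) ≤ i0 + j := by
      have h1 := dist_getVert_le P2 j
      have h2 := dist_triangle' (hconn v x) (reachable_getVert P2 j)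
      omega
    have hge : i0 + j ≤ G.dist v (P2.getVert j) := by
      have h1 := dist_getVert_to_end P2 j
      have h2 := dist_triangle' (hconn v (P2.getVert j)) (hconn (P2.getVert j) u')
      omega
    omega
  -- the two arms only share the vertex x
  have hshare : ∀ y, y ∈ P1.support → y ∈ P2.support → y = x := by
    intro y hy1 hy2
    obtain ⟨j, hjy, hjle⟩ := SimpleGraph.Walk.mem_support_iff_exists_getVert.mp hy1
    have hylev : G.dist v y = i0 + j := by rw [← hjy]; exact hlevP1 j hjle
    -- y is also on p and on q at index i0 + j
    have hyp : y ∈ p.support := SimpleGraph.Walk.support_dropUntil_subset p hxp hy1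
    have hyq : y ∈ q.support := SimpleGraph.Walk.support_dropUntil_subset q hxq hy2
    obtain ⟨s, hsy, hsle⟩ := SimpleGraph.Walk.mem_support_iff_exists_getVert.mp hyp
    obtain ⟨t, hty, htle⟩ := SimpleGraph.Walk.mem_support_iff_exists_getVert.mp hyq
    have hs : s = i0 + j := by
      have := geodesic_getVert p (by rw [hp, hudist]) hsle
      rw [hsy] at this
      omega
    have ht : t = i0 + j := by
      have := geodesic_getVert q (by rw [hq, hu'dist]) htle
      rw [hty] at this
      omega
    have hmemK : i0 + j ∈ K := by
      rw [hK, Finset.mem_filter, Finset.mem_range]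
      constructor
      · omega
      · rw [← hs, hsy, ← show q.getVert t = y from hty, ht, hs]
    have := K.le_max' _ hmemK
    rw [← hi0] at this
    have hj0 : j = 0 := by omega
    rw [hj0] at hjy
    rw [P1.getVert_zero] at hjy
    exact hjy.symm
  -- assemble the cycle
  have hxuP1 : u ∈ P1.support := SimpleGraph.Walk.end_mem_support P1
  have hxu'P2 : u' ∈ P2.support := SimpleGraph.Walk.end_mem_support P2
  have hxune : u ≠ x := by
    intro hEq
    rw [← hEq] at hxlvl
    omega
  have hxu'ne : u' ≠ x := by
    intro hEq
    rw [← hEq] at hxlvl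
    omega
  set W := SimpleGraph.Walk.cons huadj (P2.reverse.append P1) with hW
  refine ⟨u, W, ?_, ?_⟩
  · rw [hW, SimpleGraph.Walk.cons_isCycle_iff]
    constructor
    · -- the concatenation is a path
      apply SimpleGraph.Walk.IsPath.mk'
      rw [SimpleGraph.Walk.support_append, List.nodup_append]
      refine ⟨hP2path.reverse.support_nodup, hP1path.support_nodup.tail, ?_⟩
      intro y hy1 y' hy2 hyy'
      subst hyy'
      rw [SimpleGraph.Walk.support_reverse, List.mem_reverse] at hy1
      have hy1' : y ∈ P1.support := List.mem_of_mem_tail hy2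
      have hyx : y = x := hshare y hy1' hy1
      subst hyx
      have := hP1path.support_nodup
      rw [SimpleGraph.Walk.support_eq_cons] at this
      rw [List.nodup_cons] at this
      exact this.1 hy2
    · -- the closing edge is not among the path edges
      intro hmem
      rw [SimpleGraph.Walk.edges_append, List.mem_append] at hmem
      rcases hmem with h | h
      · rw [SimpleGraph.Walk.edges_reverse, List.mem_reverse] at h
        have := SimpleGraph.Walk.fst_mem_support_of_mem_edges P2 h
        have hux := hshare u hxuP1 this
        exact hxune hux
      · have := SimpleGraph.Walk.snd_mem_support_of_mem_edges P1 h
        have hu'x := hshare u' this hxu'P2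
        exact hxu'ne hu'x
  · rw [hW]
    rw [SimpleGraph.Walk.length_cons, SimpleGraph.Walk.length_append,
      SimpleGraph.Walk.length_reverse]
    omega

end CycleExists
end MooreAux


open SimpleGraph Finset MooreAux in
/-- If χ_γ(G) attains the maximum value M+1, then G is a Moore graph:
Δ-regular of order M+1, with girth 2γ+1 and diameter γ. -/
theorem moore_of_chromaticNumber_eq {V : Type*} [Fintype V] [DecidableEq V] (G : SimpleGraph V)
    [DecidableRel G.Adj] (hconn : G.Connected) (Δ γ : ℕ)
    (hΔ : G.maxDegree = Δ) (h3 : 3 ≤ Δ) (hγ : 2 ≤ γ)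
    (heq : (G.power γ).chromaticNumber =
      ((Δ * ((Δ - 1) ^ γ - 1) / (Δ - 2) + 1 : ℕ) : ℕ∞)) :
    G.IsRegularOfDegree Δ ∧ Fintype.card V = Δ * ((Δ - 1) ^ γ - 1) / (Δ - 2) + 1 ∧
      G.egirth = ((2 * γ + 1 : ℕ) : ℕ∞) ∧ G.ediam = (γ : ℕ∞) := by
  classical
  have hMsum : Δ * ((Δ - 1) ^ γ - 1) / (Δ - 2) = Δ * ∑ i ∈ Finset.range γ, (Δ - 1) ^ i :=
    moore_eq_sum h3 γ
  set M : ℕ := Δ * ∑ i ∈ Finset.range γ, (Δ - 1) ^ i with hMdef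
  have hM1 : 1 ≤ M := by
    have hS1 : 1 ≤ ∑ i ∈ Finset.range γ, (Δ - 1) ^ i := by
      have h0 : (Δ - 1) ^ 0 = 1 := pow_zero _
      calc 1 = (Δ - 1) ^ 0 := h0.symm
        _ ≤ ∑ i ∈ Finset.range γ, (Δ - 1) ^ i :=
          Finset.single_le_sum (fun i _ => Nat.zero_le _) (Finset.mem_range.mpr (by omega))
    exact Nat.one_le_iff_ne_zero.mpr (by positivity)
  have hdeg : ∀ u, G.degree u ≤ Δ := fun u => hΔ ▸ G.degree_le_maxDegree u
  have hHconn : (G.power γ).Connected := power_connected (by omega) hconn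
  have heq' : (G.power γ).chromaticNumber = ((M + 1 : ℕ) : ℕ∞) := by
    rw [heq, hMsum]
  have hnotM : ¬ (G.power γ).Colorable M := by
    intro hcol
    have hle := hcol.chromaticNumber_le
    rw [heq'] at hle
    have := Nat.cast_le.mp (hle : ((M + 1 : ℕ) : ℕ∞) ≤ (M : ℕ∞))
    omega
  have hball_le : ∀ u : V, (gball G u γ).card ≤ 1 + M := by
    intro u
    have := card_gball_le hconn hdeg u γ
    rw [← hMdef] at this
    exact this
  have hdegH_le : ∀ u, (G.power γ).degree u ≤ M := by
    intro u
    rw [power_degree hconn]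
    have := hball_le u
    omega
  have hfull : ∀ u : V, (gball G u γ).card = 1 + M := by
    by_contra h
    push_neg at h
    obtain ⟨v₀, hv₀⟩ := h
    have hmem : v₀ ∈ gball G v₀ γ := mem_gball.mpr (by
      rw [(hconn.dist_eq_zero_iff).mpr rfl]; omega)
    have hpos : 1 ≤ (gball G v₀ γ).card := Finset.card_pos.mpr ⟨v₀, hmem⟩
    have hlt : (gball G v₀ γ).card < 1 + M := lt_of_le_of_ne (hball_le v₀) hv₀
    have hlow : (G.power γ).degree v₀ < M := by
      rw [power_degree hconn]
      omega
    exact hnotM (colorable_of_low_vertex (G.power γ) hHconn hdegH_le v₀ hlow)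
  have hfullS : ∀ u : V, (gball G u γ).card = 1 + Δ * ∑ i ∈ Finset.range γ, (Δ - 1) ^ i :=
    fun u => by rw [hfull u]
  have hdegH : ∀ u, (G.power γ).degree u = M := by
    intro u
    rw [power_degree hconn, hfull u]
    omega
  have hn_ge : M + 1 ≤ Fintype.card V := by
    have hc := (G.power γ).colorable_of_fintype.chromaticNumber_le
    rw [heq'] at hc
    exact Nat.cast_le.mp hc
  have hn_le : Fintype.card V ≤ M + 1 := by
    by_contra hgt
    push_neg at hgt
    obtain ⟨v⟩ := hconn.nonempty
    have hnotall : ¬ (∀ u, G.dist v u ≤ γ) := by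
      intro hall
      have : gball G v γ = Finset.univ := by
        apply Finset.eq_univ_iff_forall.mpr
        intro u
        exact mem_gball.mpr (hall u)
      have hcard : (gball G v γ).card = Fintype.card V := by
        rw [this, Finset.card_univ]
      rw [hfull v] at hcard
      omega
    push_neg at hnotall
    obtain ⟨z, hz⟩ := hnotall
    obtain ⟨p, hp⟩ := (hconn v z).exists_walk_length_eq_dist
    have hbdist : G.dist v (p.getVert (γ + 1)) = γ + 1 :=
      geodesic_getVert p hp (by omega)
    obtain ⟨q, hq⟩ := (hconn v (p.getVert (γ + 1))).exists_walk_length_eq_dist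
    rw [hbdist] at hq
    have hccdist : G.dist v (q.getVert 1) = 1 := geodesic_getVert q (by rw [hq, hbdist]) (by omega)
    have hccb : G.dist (q.getVert 1) (p.getVert (γ + 1)) = γ := by
      have h1 := dist_getVert_to_end q 1
      have h2 := dist_triangle' (hconn v (q.getVert 1)) (hconn (q.getVert 1) (p.getVert (γ + 1)))
      omega
    have hcca : G.dist (q.getVert 1) v = 1 := by
      rw [SimpleGraph.dist_comm]; exact hccdist
    exact hnotM (colorable_of_far_pair hconn hγ hM1 hdegH hbdist hcca hccb)
  have hn : Fintype.card V = M + 1 := le_antisymm hn_le hn_ge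
  have hdistle : ∀ v u : V, G.dist v u ≤ γ := by
    intro v u
    have huniv : gball G v γ = Finset.univ :=
      Finset.eq_univ_of_card _ (by rw [hfull v, hn]; omega)
    exact mem_gball.mp (huniv ▸ Finset.mem_univ u)
  have hreg : G.IsRegularOfDegree Δ := by
    intro v
    have h1 : (lvl G v 1).card = Δ * (Δ - 1) ^ (1 - 1) :=
      lvl_card_eq hconn hdeg h3 hγ (hfullS v) 1 le_rfl (by omega)
    rw [lvl_one] at h1
    rw [← SimpleGraph.card_neighborFinset_eq_degree]
    simpa using h1
  have hediam : G.ediam = (γ : ℕ∞) := by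
    apply le_antisymm
    · apply SimpleGraph.ediam_le_of_edist_le
      intro u w
      obtain ⟨p, hp⟩ := (hconn u w).exists_walk_length_eq_dist
      calc G.edist u w ≤ (p.length : ℕ∞) := SimpleGraph.edist_le p
        _ ≤ (γ : ℕ∞) := by
            rw [hp]
            exact_mod_cast Nat.cast_le.mpr (hdistle u w)
    · obtain ⟨v⟩ := hconn.nonempty
      have hlvlγ : (lvl G v γ).card = Δ * (Δ - 1) ^ (γ - 1) :=
        lvl_card_eq hconn hdeg h3 hγ (hfullS v) γ (by omega) le_rfl
      have hpow1 : 1 ≤ (Δ - 1) ^ (γ - 1) := Nat.one_le_pow _ _ (by omega)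
      obtain ⟨u, hu⟩ := Finset.card_pos.mp
        (by rw [hlvlγ]; exact Nat.mul_pos (by omega) (by omega))
      have hudist : G.dist v u = γ := mem_lvl.mp hu
      have hne : G.edist v u ≠ ⊤ := SimpleGraph.edist_ne_top_iff_reachable.mpr (hconn v u)
      obtain ⟨w, hw⟩ := SimpleGraph.exists_walk_of_edist_ne_top hne
      have hge : (γ : ℕ∞) ≤ G.edist v u := by
        rw [← hw]
        exact_mod_cast Nat.cast_le.mpr (by
          have := SimpleGraph.dist_le w
          omega)
      exact le_trans hge SimpleGraph.edist_le_ediam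
  have hgirth : G.egirth = ((2 * γ + 1 : ℕ) : ℕ∞) := by
    have hlow : ((2 * γ + 1 : ℕ) : ℕ∞) ≤ G.egirth :=
      SimpleGraph.le_egirth.mpr (fun a w hw =>
        Nat.cast_le.mpr (no_short_cycle hconn hdeg h3 hγ hfullS a w hw))
    obtain ⟨x, w, hcyc, hlen⟩ := exists_moore_cycle hconn hdeg h3 hγ hfullS hdistle
    have hup : G.egirth ≤ (w.length : ℕ∞) := by
      rw [SimpleGraph.egirth]
      refine le_trans (iInf_le _ x) (le_trans (iInf_le _ w) (iInf_le _ hcyc))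
    have hcast : (w.length : ℕ∞) ≤ ((2 * γ + 1 : ℕ) : ℕ∞) := Nat.cast_le.mpr hlen
    exact le_antisymm (le_trans hup hcast) hlow
  refine ⟨hreg, ?_, hgirth, hediam⟩
  rw [hMsum]
  exact hn
end

section
/- Let G be a connected graph with maximum degree Δ ≥ 3 and γ ≥ 2, and let M = Δ·((Δ-1)^γ - 1)/(Δ-2). For any edge uv of G, the graph G^γ with both vertices u and v removed has chromatic number at most M-1. -/
open Finset SimpleGraph

lemma power_adj_iff {V : Type*} (G : SimpleGraph V) (γ : ℕ) (a b : V) :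
    (G.power γ).Adj a b ↔ a ≠ b ∧ G.Reachable a b ∧ G.dist a b ≤ γ := Iff.rfl

section Greedy

variable {V : Type*} [Fintype V] [DecidableEq V] (G : SimpleGraph V) [DecidableRel G.Adj]

noncomputable def greedyCol (ord : V → ℕ) (k : ℕ) (w : V) : Fin (k + 1) :=
  let prev : Finset V := Finset.univ.filter fun x => G.Adj w x ∧ ord x < ord w
  let used : Finset (Fin (k + 1)) := prev.attach.image fun x => greedyCol ord k x.1
  if h : usedᶜ.Nonempty then h.choose else ⟨0, Nat.succ_pos k⟩
termination_by ord w
decreasing_by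
  have := x.2
  simp only [prev, Finset.mem_filter] at this
  exact this.2.2

omit [DecidableEq V] in
lemma greedyCol_not_mem (ord : V → ℕ) (k : ℕ) (w : V)
    (h : (Finset.univ.filter fun x => G.Adj w x ∧ ord x < ord w).card ≤ k) :
    greedyCol G ord k w ∉
      ((Finset.univ.filter fun x => G.Adj w x ∧ ord x < ord w).attach.image
        fun x => greedyCol G ord k x.1) := by
  set prev : Finset V := Finset.univ.filter fun x => G.Adj w x ∧ ord x < ord w with hprev
  set used : Finset (Fin (k + 1)) := prev.attach.image fun x => greedyCol G ord k x.1 with hused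
  have hcard : used.card ≤ k := le_trans (Finset.card_image_le.trans (by simp)) h
  have hne : usedᶜ.Nonempty := by
    rw [← Finset.card_pos, Finset.card_compl]
    simp only [Fintype.card_fin]
    omega
  rw [greedyCol, dif_pos hne]
  have := hne.choose_spec
  simpa using this

lemma colorable_greedy (ord : V → ℕ) (hinj : Function.Injective ord) (k : ℕ)
    (h : ∀ w, (Finset.univ.filter fun x => G.Adj w x ∧ ord x < ord w).card ≤ k) :
    G.Colorable (k + 1) := by
  refine ⟨SimpleGraph.Coloring.mk (greedyCol G ord k) ?_⟩
  intro a b hab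
  wlog hlt : ord b < ord a generalizing a b
  · exact fun e => this hab.symm (by
      rcases lt_or_ge (ord a) (ord b) with h' | h'
      · exact h'
      · rcases lt_or_eq_of_le h' with h' | h'
        · exact absurd h' hlt
        · exact absurd (hinj h'.symm) hab.ne) e.symm
  intro heq
  apply greedyCol_not_mem G ord k a (h a)
  rw [heq]
  exact Finset.mem_image.mpr ⟨⟨b, by simp [hab, hlt]⟩, Finset.mem_attach _ _, rfl⟩

end Greedy

section Dist

variable {V : Type*} {G : SimpleGraph V}

lemma dist_getVert_left (hconn : G.Connected) {w x : V} (p : G.Walk w x) (i : ℕ) :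
    G.dist w (p.getVert i) ≤ i := by
  induction p generalizing i with
  | nil => simp [SimpleGraph.Walk.getVert, SimpleGraph.dist_self]
  | @cons a b c h q ih =>
    cases i with
    | zero => simp [SimpleGraph.Walk.getVert, SimpleGraph.dist_self]
    | succ n =>
      rw [SimpleGraph.Walk.getVert_cons_succ]
      calc G.dist a _ ≤ G.dist a b + G.dist b _ := hconn.dist_triangle
        _ ≤ 1 + n := by
            gcongr
            · exact le_of_eq (SimpleGraph.dist_eq_one_iff_adj.mpr h)
            · exact ih n
        _ = n + 1 := by omega

lemma dist_getVert_right (hconn : G.Connected) {w x : V} (p : G.Walk w x) (i : ℕ) :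
    G.dist (p.getVert i) x ≤ p.length - i := by
  induction p generalizing i with
  | nil => simp [SimpleGraph.Walk.getVert, SimpleGraph.dist_self]
  | @cons a b c h q ih =>
    cases i with
    | zero =>
      simp only [SimpleGraph.Walk.getVert_zero, SimpleGraph.Walk.length_cons, Nat.sub_zero]
      calc G.dist a c ≤ G.dist a b + G.dist b c := hconn.dist_triangle
        _ ≤ 1 + q.length := by
            gcongr
            · exact le_of_eq (SimpleGraph.dist_eq_one_iff_adj.mpr h)
            · exact SimpleGraph.dist_le q
        _ = q.length + 1 := by omega
    | succ n =>
      rw [SimpleGraph.Walk.getVert_cons_succ]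
      simpa using ih n

lemma getVert_dist_eq (hconn : G.Connected) {w x : V} (p : G.Walk w x)
    (hp : p.length = G.dist w x) (i : ℕ) (hi : i ≤ G.dist w x) :
    G.dist w (p.getVert i) = i ∧ G.dist (p.getVert i) x = G.dist w x - i := by
  have h1 := dist_getVert_left hconn p i
  have h2 := dist_getVert_right hconn p i
  rw [hp] at h2
  have h3 : G.dist w x ≤ G.dist w (p.getVert i) + G.dist (p.getVert i) x :=
    hconn.dist_triangle
  omega

lemma exists_pred (hconn : G.Connected) {w x : V} (h : 1 ≤ G.dist w x) :
    ∃ y, G.Adj y x ∧ G.dist w y + 1 = G.dist w x := by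
  obtain ⟨p, hp⟩ := (hconn w x).exists_walk_length_eq_dist
  refine ⟨p.getVert (G.dist w x - 1), ?_, ?_⟩
  · have := p.adj_getVert_succ (i := G.dist w x - 1) (by omega)
    rwa [show G.dist w x - 1 + 1 = p.length by omega, p.getVert_length] at this
  · have := (getVert_dist_eq hconn p hp (G.dist w x - 1) (by omega)).1
    omega

end Dist

section Sphere

variable {V : Type*} [Fintype V] [DecidableEq V] {G : SimpleGraph V} [DecidableRel G.Adj]

noncomputable def predFn (hconn : G.Connected) (w : V) : V → V := fun x =>
  if h : 1 ≤ G.dist w x then (exists_pred hconn h).choose else x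

lemma predFn_spec (hconn : G.Connected) {w x : V} (h : 1 ≤ G.dist w x) :
    G.Adj (predFn hconn w x) x ∧ G.dist w (predFn hconn w x) + 1 = G.dist w x := by
  rw [predFn, dif_pos h]
  exact (exists_pred hconn h).choose_spec

lemma sphere_card (hconn : G.Connected) (w : V) (k : ℕ) :
    (univ.filter fun x => G.dist w x = k + 1).card ≤
      G.maxDegree * (G.maxDegree - 1) ^ k := by
  induction k with
  | zero =>
    have : (univ.filter fun x => G.dist w x = 1) ⊆ G.neighborFinset w := by
      intro x hx
      simp only [mem_filter] at hx
      rw [mem_neighborFinset]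
      exact dist_eq_one_iff_adj.mp hx.2
    simpa using le_trans (Finset.card_le_card this) (G.degree_le_maxDegree w)
  | succ k ih =>
    set S := univ.filter fun x => G.dist w x = k + 2 with hS
    set T := univ.filter fun x => G.dist w x = k + 1 with hT
    have hmaps : ∀ x ∈ S, predFn hconn w x ∈ T := by
      intro x hx
      simp only [hS, mem_filter] at hx
      have := predFn_spec hconn (w := w) (x := x) (by omega)
      simp only [hT, mem_filter]
      exact ⟨mem_univ _, by omega⟩
    have hfib : ∀ y ∈ T, (S.filter fun x => predFn hconn w x = y).card ≤
        G.maxDegree - 1 := by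
      intro y hy
      simp only [hT, mem_filter] at hy
      have hy1 : 1 ≤ G.dist w y := by omega
      obtain ⟨hadj_py, hdist_py⟩ := predFn_spec hconn hy1
      have hsub : (S.filter fun x => predFn hconn w x = y) ⊆
          G.neighborFinset y \ {predFn hconn w y} := by
        intro x hx
        simp only [mem_filter, hS] at hx
        obtain ⟨⟨_, hdx⟩, hfx⟩ := hx
        have := (predFn_spec hconn (w := w) (x := x) (by omega)).1
        rw [hfx] at this
        simp only [mem_sdiff, mem_neighborFinset, mem_singleton]
        refine ⟨this, fun hxp => ?_⟩
        rw [hxp] at hdx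
        omega
      calc (S.filter fun x => predFn hconn w x = y).card
          ≤ (G.neighborFinset y \ {predFn hconn w y}).card := Finset.card_le_card hsub
        _ = G.degree y - 1 := by
            rw [Finset.card_sdiff_of_subset (by simpa [mem_neighborFinset] using hadj_py.symm)]
            rw [Finset.card_singleton]
            rfl
        _ ≤ G.maxDegree - 1 := by
            have := G.degree_le_maxDegree y
            omega
    calc S.card ≤ (G.maxDegree - 1) * T.card :=
          Finset.card_le_mul_card_image_of_maps_to hmaps _ hfib
      _ ≤ (G.maxDegree - 1) * (G.maxDegree * (G.maxDegree - 1) ^ k) :=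
          Nat.mul_le_mul_left _ ih
      _ = G.maxDegree * (G.maxDegree - 1) ^ (k + 1) := by ring

lemma ball_card (hconn : G.Connected) (w : V) (γ : ℕ) :
    (univ.filter fun x => 1 ≤ G.dist w x ∧ G.dist w x ≤ γ).card ≤
      G.maxDegree * ∑ k ∈ Finset.range γ, (G.maxDegree - 1) ^ k := by
  have hsub : (univ.filter fun x => 1 ≤ G.dist w x ∧ G.dist w x ≤ γ) ⊆
      (Finset.range γ).biUnion fun k => univ.filter fun x => G.dist w x = k + 1 := by
    intro x hx
    simp only [mem_filter] at hx
    simp only [mem_biUnion, mem_filter, mem_range]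
    exact ⟨G.dist w x - 1, by omega, mem_univ _, by omega⟩
  calc _ ≤ _ := Finset.card_le_card hsub
    _ ≤ ∑ k ∈ Finset.range γ, (univ.filter fun x => G.dist w x = k + 1).card :=
        Finset.card_biUnion_le
    _ ≤ ∑ k ∈ Finset.range γ, G.maxDegree * (G.maxDegree - 1) ^ k :=
        Finset.sum_le_sum fun k _ => sphere_card hconn w k
    _ = _ := by rw [Finset.mul_sum]

end Sphere

lemma geom_aux (q : ℕ) (hq : 1 ≤ q) (γ : ℕ) :
    (q - 1) * ∑ k ∈ Finset.range γ, q ^ k = q ^ γ - 1 := by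
  induction γ with
  | zero => simp
  | succ n ih =>
    rw [Finset.sum_range_succ, Nat.mul_add, ih, pow_succ]
    have h1 : 1 ≤ q ^ n := Nat.one_le_pow _ _ hq
    have h2 : (q - 1) * q ^ n = q * q ^ n - q ^ n := by rw [Nat.sub_mul, one_mul]
    have h3 : q ^ n ≤ q * q ^ n := Nat.le_mul_of_pos_left _ hq
    have h4 : q * q ^ n = q ^ n * q := Nat.mul_comm _ _
    omega

lemma M_eq (Δ : ℕ) (h3 : 3 ≤ Δ) (γ : ℕ) :
    Δ * ((Δ - 1) ^ γ - 1) / (Δ - 2) = Δ * ∑ k ∈ Finset.range γ, (Δ - 1) ^ k := by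
  have hgeom := geom_aux (Δ - 1) (by omega) γ
  have hq : Δ - 1 - 1 = Δ - 2 := by omega
  rw [hq] at hgeom
  rw [← hgeom, show Δ * ((Δ - 2) * ∑ k ∈ Finset.range γ, (Δ - 1) ^ k) =
    (Δ * ∑ k ∈ Finset.range γ, (Δ - 1) ^ k) * (Δ - 2) by ring]
  exact Nat.mul_div_cancel _ (by omega)

/-- For any edge uv of G, deleting u and v from G^γ leaves a graph with
chromatic number at most M-1. -/
theorem power_delete_edge_chromaticNumber {V : Type*} [Fintype V] [DecidableEq V]
    (G : SimpleGraph V) [DecidableRel G.Adj] (hconn : G.Connected) (Δ γ : ℕ)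
    (hΔ : G.maxDegree = Δ) (h3 : 3 ≤ Δ) (hγ : 2 ≤ γ)
    (u v : V) (huv : G.Adj u v) :
    ((G.power γ).induce ({u, v}ᶜ : Set V)).chromaticNumber ≤
      ((Δ * ((Δ - 1) ^ γ - 1) / (Δ - 2) - 1 : ℕ) : ℕ∞) := by
  classical
  subst hΔ
  set Δ := G.maxDegree with hΔdef
  set M := Δ * ∑ k ∈ Finset.range γ, (Δ - 1) ^ k with hM
  have hMval : Δ * ((Δ - 1) ^ γ - 1) / (Δ - 2) = M := M_eq Δ h3 γ
  have hM3 : 3 ≤ M := by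
    have h1 : 1 ≤ ∑ k ∈ Finset.range γ, (Δ - 1) ^ k := by
      calc 1 = (Δ - 1) ^ 0 := by simp
        _ ≤ _ := Finset.single_le_sum (f := fun k => (Δ - 1) ^ k)
            (fun i _ => Nat.zero_le _) (Finset.mem_range.mpr (by omega))
    calc 3 ≤ Δ * 1 := by omega
      _ ≤ M := by rw [hM]; exact Nat.mul_le_mul_left _ h1
  set s : Set V := {u, v}ᶜ with hs
  set H := (G.power γ).induce s with hH
  -- the ordering
  set r : s → ℕ := fun x => G.dist ↑x u with hr
  set N := Fintype.card s with hN
  set e : s ≃ Fin N := Fintype.equivFin s with he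
  set R : ℕ := Finset.univ.sup r with hR
  set ord : s → ℕ := fun x => N * (R - r x) + (e x : ℕ) with hord
  have hrR : ∀ x, r x ≤ R := fun x => Finset.le_sup (Finset.mem_univ x)
  have hinj : Function.Injective ord := by
    intro x y hxy
    have hx : (e x : ℕ) < N := (e x).2
    have hy : (e y : ℕ) < N := (e y).2
    have hxy' : N * (R - r x) + (e x : ℕ) = N * (R - r y) + (e y : ℕ) := hxy
    have hmod := congrArg (· % N) hxy'
    rw [Nat.mul_add_mod, Nat.mul_add_mod, Nat.mod_eq_of_lt hx, Nat.mod_eq_of_lt hy] at hmod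
    exact e.injective (Fin.val_injective hmod)
  have hordlt : ∀ x y : s, r x < r y → ord y < ord x := by
    intro x y hxy
    have h1 : (e y : ℕ) < N := (e y).2
    calc ord y = N * (R - r y) + (e y : ℕ) := rfl
      _ < N * (R - r y) + N := by omega
      _ = N * (R - r y + 1) := by ring
      _ ≤ N * (R - r x) := Nat.mul_le_mul_left _ (by have := hrR y; omega)
      _ ≤ ord x := Nat.le_add_right _ _
  -- degree bound
  have hdeg : ∀ w : s, (Finset.univ.filter fun x => H.Adj w x ∧ ord x < ord w).card ≤ M - 2 := by
    intro w
    have hwmem := w.2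
    simp only [hs, Set.mem_compl_iff, Set.mem_insert_iff, Set.mem_singleton_iff, not_or]
      at hwmem
    obtain ⟨hwu, hwv⟩ := hwmem
    have hd1 : 1 ≤ G.dist ↑w u := hconn.pos_dist_of_ne hwu
    obtain ⟨p, hp⟩ := (hconn ↑w u).exists_walk_length_eq_dist
    obtain ⟨a, b, hab, haB, hbB, hPa, hPb⟩ :
        ∃ a b : V, a ≠ b ∧ (1 ≤ G.dist ↑w a ∧ G.dist ↑w a ≤ γ)
          ∧ (1 ≤ G.dist ↑w b ∧ G.dist ↑w b ≤ γ)
          ∧ (a = u ∨ a = v ∨ G.dist a u < G.dist ↑w u) ∧ (b = u ∨ b = v ∨ G.dist b u < G.dist ↑w u) := by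
      rcases lt_trichotomy (G.dist ↑w u) γ with hcase | hcase | hcase
      · -- d < γ : take u and v
        refine ⟨u, v, huv.ne, ⟨hd1, by omega⟩, ⟨hconn.pos_dist_of_ne hwv, ?_⟩,
          Or.inl rfl, Or.inr (Or.inl rfl)⟩
        calc G.dist ↑w v ≤ G.dist ↑w u + G.dist u v := hconn.dist_triangle
          _ = G.dist ↑w u + 1 := by rw [SimpleGraph.dist_eq_one_iff_adj.mpr huv]
          _ ≤ γ := by omega
      · -- d = γ : take u and the first vertex on a shortest w-u path
        have h1 := getVert_dist_eq hconn p hp 1 (by omega)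
        refine ⟨u, p.getVert 1, ?_, ⟨hd1, by omega⟩, ⟨by omega, by omega⟩,
          Or.inl rfl, Or.inr (Or.inr (by omega))⟩
        intro heq
        rw [← heq] at h1
        omega
      · -- γ < d : take the first two vertices on a shortest w-u path
        have h1 := getVert_dist_eq hconn p hp 1 (by omega)
        have h2 := getVert_dist_eq hconn p hp 2 (by omega)
        refine ⟨p.getVert 1, p.getVert 2, ?_, ⟨by omega, by omega⟩, ⟨by omega, by omega⟩,
          Or.inr (Or.inr (by omega)), Or.inr (Or.inr (by omega))⟩
        intro heq
        rw [heq] at h1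
        omega
    set B := Finset.univ.filter fun z => 1 ≤ G.dist ↑w z ∧ G.dist ↑w z ≤ γ with hB
    have himg : ((Finset.univ.filter fun x : s => H.Adj w x ∧ ord x < ord w).image
        Subtype.val) ⊆ B \ {a, b} := by
      intro z hz
      simp only [Finset.mem_image, Finset.mem_filter] at hz
      obtain ⟨x, ⟨-, hadj, hordx⟩, rfl⟩ := hz
      have hadj' : (G.power γ).Adj ↑w ↑x := hadj
      rw [power_adj_iff] at hadj'
      obtain ⟨hne, hreach, hle⟩ := hadj'
      have hdist1 : 1 ≤ G.dist ↑w ↑x := hconn.pos_dist_of_ne hne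
      have hxmem := x.2
      simp only [hs, Set.mem_compl_iff, Set.mem_insert_iff, Set.mem_singleton_iff, not_or]
        at hxmem
      have hnot : ∀ c : V, (c = u ∨ c = v ∨ G.dist c u < G.dist ↑w u) → (x : V) ≠ c := by
        intro c hc hxc
        rcases hc with rfl | rfl | hc
        · exact hxmem.1 hxc
        · exact hxmem.2 hxc
        · have hrx : r x < r w := by
            rw [hr]
            simp only
            rw [hxc]
            exact hc
          have := hordlt x w hrx
          omega
      simp only [Finset.mem_sdiff, hB, Finset.mem_filter, Finset.mem_insert,
        Finset.mem_singleton, not_or]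
      exact ⟨⟨Finset.mem_univ _, hdist1, hle⟩, hnot a hPa, hnot b hPb⟩
    have habB : ({a, b} : Finset V) ⊆ B := by
      intro z hz
      simp only [Finset.mem_insert, Finset.mem_singleton] at hz
      simp only [hB, Finset.mem_filter]
      rcases hz with rfl | rfl
      · exact ⟨Finset.mem_univ _, haB⟩
      · exact ⟨Finset.mem_univ _, hbB⟩
    have hBcard : B.card ≤ M := by
      rw [hM, hΔdef]
      exact ball_card hconn ↑w γ
    calc (Finset.univ.filter fun x : s => H.Adj w x ∧ ord x < ord w).card
        = ((Finset.univ.filter fun x : s => H.Adj w x ∧ ord x < ord w).image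
            Subtype.val).card := (Finset.card_image_of_injective _ Subtype.val_injective).symm
      _ ≤ (B \ ({a, b} : Finset V)).card := Finset.card_le_card himg
      _ = B.card - ({a, b} : Finset V).card := Finset.card_sdiff_of_subset habB
      _ = B.card - 2 := by rw [Finset.card_pair hab]
      _ ≤ M - 2 := by omega
  have hcol : H.Colorable (M - 2 + 1) := colorable_greedy H ord hinj (M - 2) hdeg
  have hfin : H.chromaticNumber ≤ ((M - 1 : ℕ) : ℕ∞) := by
    rw [show M - 1 = M - 2 + 1 by omega]
    exact hcol.chromaticNumber_le
  rw [hMval]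
  exact hfin
end

section
/- Let G be a connected graph on at least 3 vertices. Then entrywise A(G²) ≤ A(G)² − L(G), where A denotes adjacency matrix and L = D − A is the Laplacian matrix; moreover equality holds if and only if the girth of G is at least 5. -/
open Finset

set_option linter.unusedSectionVars false

namespace AdjSqAux

variable {V : Type*} [Fintype V] [DecidableEq V] (G : SimpleGraph V) [DecidableRel G.Adj]

/-- common neighbors -/
def cn (i j : V) : Finset V := Finset.univ.filter (fun k => G.Adj i k ∧ G.Adj k j)

lemma sq_apply (i j : V) :
    ((G.adjMatrix ℝ) ^ 2) i j = ((cn G i j).card : ℝ) := by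
  rw [sq, Matrix.mul_apply, cn, card_filter]
  push_cast
  refine Finset.sum_congr rfl fun k _ => ?_
  by_cases h1 : G.Adj i k <;> by_cases h2 : G.Adj k j <;> simp [h1, h2]

lemma lap_apply (i j : V) :
    G.lapMatrix ℝ i j = (if i = j then (G.degree i : ℝ) else 0)
      - (if G.Adj i j then 1 else 0) := by
  simp [SimpleGraph.lapMatrix, SimpleGraph.degMatrix, Matrix.diagonal_apply]

lemma rhs_apply (i j : V) (hne : i ≠ j) :
    ((G.adjMatrix ℝ) ^ 2 - G.lapMatrix ℝ) i j
      = ((cn G i j).card : ℝ) + (if G.Adj i j then 1 else 0) := by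
  simp [Matrix.sub_apply, sq_apply, lap_apply, hne]

lemma rhs_diag (i : V) : ((G.adjMatrix ℝ) ^ 2 - G.lapMatrix ℝ) i i = 0 := by
  have : (cn G i i).card = G.degree i := by
    rw [SimpleGraph.degree, cn]
    congr 1
    ext k
    simp [SimpleGraph.adj_comm, and_self, SimpleGraph.mem_neighborFinset]
  simp [Matrix.sub_apply, sq_apply, lap_apply, this]

lemma dist_le_two_iff (i j : V) (hne : i ≠ j) (hr : G.Reachable i j) :
    G.dist i j ≤ 2 ↔ (G.Adj i j ∨ (cn G i j).Nonempty) := by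
  constructor
  · intro h
    have hpos := hr.pos_dist_of_ne hne
    obtain ⟨p, hp⟩ := hr.exists_walk_length_eq_dist
    interval_cases hd : G.dist i j
    · left
      cases p with
      | nil => exact absurd rfl hne
      | cons h q =>
        have := SimpleGraph.Walk.eq_of_length_eq_zero (by simpa using hp)
        exact this ▸ h
    · right
      cases p with
      | nil => exact absurd rfl hne
      | cons hik q =>
        cases q with
        | nil => simp at hp
        | cons hkm r =>
          have := SimpleGraph.Walk.eq_of_length_eq_zero (p := r) (by simpa using hp)
          subst this
          exact ⟨_, Finset.mem_filter.mpr ⟨Finset.mem_univ _, hik, hkm⟩⟩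
  · rintro (h | ⟨k, hk⟩)
    · exact le_trans (SimpleGraph.dist_eq_one_iff_adj.mpr h).le one_le_two
    · simp only [cn, mem_filter] at hk
      have := G.dist_le (SimpleGraph.Walk.cons hk.2.1 (SimpleGraph.Walk.cons hk.2.2 SimpleGraph.Walk.nil))
      simpa using this

lemma triangle_cycle {a b c : V} (hab : G.Adj a b) (hbc : G.Adj b c) (hca : G.Adj c a) :
    ∃ w : G.Walk a a, w.IsCycle ∧ w.length = 3 := by
  refine ⟨.cons hab (.cons hbc (.cons hca .nil)), ?_, rfl⟩
  rw [SimpleGraph.Walk.isCycle_def]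
  have h1 := hab.ne; have h2 := hbc.ne; have h3 := hca.ne
  refine ⟨⟨?_⟩, by simp, ?_⟩
  · simp only [SimpleGraph.Walk.edges_cons, SimpleGraph.Walk.edges_nil, List.nodup_cons,
      List.mem_cons, List.not_mem_nil, or_false, List.nodup_nil, and_true, Sym2.eq_iff]
    tauto
  · simp only [SimpleGraph.Walk.support_cons, SimpleGraph.Walk.support_nil, List.tail_cons,
      List.nodup_cons, List.mem_cons, List.not_mem_nil, or_false, List.nodup_nil, and_true,
      List.mem_singleton]
    tauto

lemma square_cycle {a b c d : V} (hab : G.Adj a b) (hbc : G.Adj b c) (hcd : G.Adj c d)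
    (hda : G.Adj d a) (hac : a ≠ c) (hbd : b ≠ d) :
    ∃ w : G.Walk a a, w.IsCycle ∧ w.length = 4 := by
  refine ⟨.cons hab (.cons hbc (.cons hcd (.cons hda .nil))), ?_, rfl⟩
  rw [SimpleGraph.Walk.isCycle_def]
  have h1 := hab.ne; have h2 := hbc.ne; have h3 := hcd.ne; have h4 := hda.ne
  refine ⟨⟨?_⟩, by simp, ?_⟩
  · simp only [SimpleGraph.Walk.edges_cons, SimpleGraph.Walk.edges_nil, List.nodup_cons,
      List.mem_cons, List.not_mem_nil, or_false, List.nodup_nil, and_true, Sym2.eq_iff]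
    tauto
  · simp only [SimpleGraph.Walk.support_cons, SimpleGraph.Walk.support_nil, List.tail_cons,
      List.nodup_cons, List.mem_cons, List.not_mem_nil, or_false, List.nodup_nil, and_true,
      List.mem_singleton]
    tauto

end AdjSqAux

open AdjSqAux in
/-- A(G²) ≤ A(G)² - L(G) entrywise, with equality iff the girth of G is at least 5. -/
theorem adjMatrix_square_le {V : Type*} [Fintype V] [DecidableEq V]
    (G : SimpleGraph V) [DecidableRel G.Adj] (hconn : G.Connected)
    (h3 : 3 ≤ Fintype.card V) :
    (∀ i j, (G.power 2).adjMatrix ℝ i j ≤ ((G.adjMatrix ℝ) ^ 2 - G.lapMatrix ℝ) i j) ∧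
    ((∀ i j, (G.power 2).adjMatrix ℝ i j = ((G.adjMatrix ℝ) ^ 2 - G.lapMatrix ℝ) i j) ↔
      5 ≤ G.egirth) := by
  classical
  have hLHS : ∀ i j : V, i ≠ j → ((G.power 2).adjMatrix ℝ i j
      = if G.Adj i j ∨ (cn G i j).Nonempty then 1 else 0) := by
    intro i j hne
    have hr := hconn i j
    rw [SimpleGraph.adjMatrix_apply]
    by_cases h : G.Adj i j ∨ (cn G i j).Nonempty
    · rw [if_pos h, if_pos ⟨hne, hr, (dist_le_two_iff G i j hne hr).mpr h⟩]
    · rw [if_neg h, if_neg]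
      rintro ⟨-, -, hd⟩
      exact h ((dist_le_two_iff G i j hne hr).mp hd)
  have hdiagL : ∀ i : V, (G.power 2).adjMatrix ℝ i i = 0 := by
    intro i; simp
  refine ⟨?_, ?_, ?_⟩
  · intro i j
    rcases eq_or_ne i j with rfl | hne
    · rw [hdiagL, rhs_diag]
    · rw [hLHS i j hne, rhs_apply G i j hne]
      have hc0 : (0:ℝ) ≤ ((cn G i j).card : ℝ) := Nat.cast_nonneg _
      by_cases h : G.Adj i j ∨ (cn G i j).Nonempty
      · rw [if_pos h]
        rcases h with h | h
        · rw [if_pos h]; linarith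
        · have h1 : 1 ≤ (cn G i j).card := Finset.card_pos.mpr h
          have h1' : (1:ℝ) ≤ ((cn G i j).card : ℝ) := by exact_mod_cast h1
          split_ifs <;> linarith
      · rw [if_neg h]
        split_ifs <;> linarith
  · -- equality → girth ≥ 5
    intro heq
    have bound : ∀ i j : V, i ≠ j →
        (((cn G i j).card : ℝ) + (if G.Adj i j then 1 else 0) ≤ 1) := by
      intro i j hne
      rw [← rhs_apply G i j hne, ← heq i j, SimpleGraph.adjMatrix_apply]
      split_ifs <;> norm_num
    have noTri : ∀ a b c : V, G.Adj a b → G.Adj b c → G.Adj c a → False := by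
      intro a b c hab hbc hca
      have hb := bound a b hab.ne
      have hc : c ∈ cn G a b := Finset.mem_filter.mpr ⟨Finset.mem_univ _, hca.symm, hbc.symm⟩
      have h1 : 1 ≤ (cn G a b).card := Finset.card_pos.mpr ⟨c, hc⟩
      have h1' : (1:ℝ) ≤ ((cn G a b).card : ℝ) := by exact_mod_cast h1
      rw [if_pos hab] at hb
      linarith
    have noSq : ∀ i j k l : V, i ≠ j → k ≠ l → G.Adj i k → G.Adj k j →
        G.Adj i l → G.Adj l j → False := by
      intro i j k l hij hkl hik hkj hil hlj
      have hb := bound i j hij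
      have hsub : ({k, l} : Finset V) ⊆ cn G i j := by
        intro x hx
        rw [Finset.mem_insert, Finset.mem_singleton] at hx
        rcases hx with rfl | rfl <;>
          exact Finset.mem_filter.mpr ⟨Finset.mem_univ _, by assumption, by assumption⟩
      have h2 : 2 ≤ (cn G i j).card := by
        calc 2 = ({k, l} : Finset V).card := (Finset.card_pair hkl).symm
          _ ≤ _ := Finset.card_le_card hsub
      have h2' : (2:ℝ) ≤ ((cn G i j).card : ℝ) := by exact_mod_cast h2
      split_ifs at hb <;> linarith
    rw [SimpleGraph.le_egirth]
    intro a w hw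
    by_contra hlt
    have hlt' : w.length < 5 := by
      rw [not_le] at hlt
      exact_mod_cast hlt
    have h3l := hw.three_le_length
    have hlen : w.length = 3 ∨ w.length = 4 := by omega
    cases w with
    | nil => simp at hlen
    | cons h1 p => cases p with
      | nil => simp at hlen
      | cons h2 q => cases q with
        | nil => simp at hlen
        | cons h4 r => cases r with
          | nil => exact noTri _ _ _ h1 h2 h4
          | cons h5 s => cases s with
            | nil =>
              have hs := hw.support_nodup
              simp only [SimpleGraph.Walk.support_cons, SimpleGraph.Walk.support_nil,
                List.tail_cons, List.nodup_cons, List.mem_cons, List.mem_singleton,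
                List.not_mem_nil, or_false, List.nodup_nil, and_true] at hs
              push_neg at hs
              obtain ⟨⟨hbc, hbd, hba⟩, ⟨hcd, hca⟩, hda⟩ := hs
              exact noSq _ _ _ _ (Ne.symm hca) hbd h1 h2 h5.symm h4.symm
            | cons h6 t => simp at hlen
  · -- girth ≥ 5 → equality
    intro hg i j
    rcases eq_or_ne i j with rfl | hne
    · rw [hdiagL, rhs_diag]
    · rw [hLHS i j hne, rhs_apply G i j hne]
      by_cases hadj : G.Adj i j
      · have hcn : cn G i j = ∅ := by
          rw [Finset.eq_empty_iff_forall_notMem]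
          intro k hk
          rw [cn, Finset.mem_filter] at hk
          obtain ⟨w, hw, hl⟩ := triangle_cycle G hk.2.1 hk.2.2 hadj.symm
          have h5 := SimpleGraph.le_egirth.mp hg _ w hw
          rw [hl] at h5
          norm_num at h5
        rw [if_pos (Or.inl hadj), hcn, if_pos hadj]
        norm_num
      · by_cases hne2 : (cn G i j).Nonempty
        · have hcard : (cn G i j).card = 1 := by
            obtain ⟨k, hk⟩ := hne2
            rw [Finset.card_eq_one]
            refine ⟨k, Finset.eq_singleton_iff_unique_mem.mpr ⟨hk, ?_⟩⟩
            intro l hl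
            by_contra hlk
            rw [cn, Finset.mem_filter] at hk hl
            obtain ⟨w, hw, hlen⟩ :=
              square_cycle G hl.2.1 hl.2.2 hk.2.2.symm hk.2.1.symm hne hlk
            have h5 := SimpleGraph.le_egirth.mp hg _ w hw
            rw [hlen] at h5
            norm_num at h5
          rw [if_pos (Or.inr (Finset.card_pos.mp (by rw [hcard]; norm_num))),
            hcard, if_neg hadj]
          norm_num
        · rw [Finset.not_nonempty_iff_eq_empty] at hne2
          rw [if_neg (by rw [hne2]; simp [hadj]), hne2, if_neg hadj]
          norm_num
end
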